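/- arXiv:2404.18855 — 6 statements merged into one kernel-verified Lean document; each statement's English description precedes it below -/
import Mathlib

section
/- Let F be a finite replacement-invariant subset of [0,1]. If F is uncountable, then F is dense in [0,1]. In particular, if F has non-zero Hausdorff dimension, then F is dense in [0,1]. -/
open Filter Set Topology MeasureTheory
open scoped ENNReal NNReal

/-- The Pierce expansion map `T`. -/
noncomputable def pierceT (x : ℝ) : ℝ := if x = 0 then 0 else 1 - (⌊1 / x⌋₊ : ℝ) * x

/-- The first Pierce digit `d₁(x)`, with `d₁(0) = ∞`. -/
noncomputable def pierceD1 (x : ℝ) : ℕ∞ := if x = 0 then ⊤ else ((⌊1 / x⌋₊ : ℕ) : ℕ∞)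

/-- The `k`-th Pierce expansion digit `d_k(x)` (for `k ≥ 1`). -/
noncomputable def pierceDigit (k : ℕ) (x : ℝ) : ℕ∞ := pierceD1 (pierceT^[k - 1] x)

/-- Extended logarithm on `ℕ∞`, with the convention `log ∞ = ∞`. -/
noncomputable def enlog (m : ℕ∞) : ℝ≥0∞ :=
  if m = ⊤ then ⊤ else ENNReal.ofReal (Real.log ((WithTop.untopD 0 m : ℕ) : ℝ))

/-- `A(α) = {x ∈ [0,1] : lim (log d_n(x))/n = α}`. -/
noncomputable def pierceA (α : ℝ≥0∞) : Set ℝ :=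
  {x ∈ Icc (0 : ℝ) 1 |
    Tendsto (fun n : ℕ => enlog (pierceDigit n x) / (n : ℝ≥0∞)) atTop (𝓝 α)}

/-- The number of leap years up to year `N` with intercalation sequence `σ`:
`L(σ, N) = Σ_{k ≥ 1} (-1)^{k+1} ⌊N/(σ₁⋯σ_k)⌋`, with `⌊N/∞⌋ = 0`. -/
noncomputable def leapL (σ : ℕ → ℕ∞) (N : ℕ) : ℝ :=
  ∑' k : ℕ, (-1 : ℝ) ^ k *
    ((N / WithTop.untopD 0 (∏ i ∈ Finset.Icc 1 (k + 1), σ i) : ℕ) : ℝ)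

/-- The quotient `(Nx - L((d_k(x))_k, N))/√(log N)`. -/
noncomputable def leapQ (x : ℝ) (N : ℕ) : ℝ :=
  ((N : ℝ) * x - leapL (fun k => pierceDigit k x) N) / Real.sqrt (Real.log N)

/-- `S(α)`: the set of `x ∈ [0,1]` whose leap-year quotient has limsup `1/√(2α)`
and liminf `-1/√(2α)`. -/
noncomputable def pierceS (α : ℝ≥0∞) : Set ℝ :=
  {x ∈ Icc (0 : ℝ) 1 |
    Filter.limsup (fun N : ℕ => ((leapQ x N : ℝ) : EReal)) atTop
      = (((2 * α) ^ (-(1 / 2) : ℝ) : ℝ≥0∞) : EReal) ∧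
    Filter.liminf (fun N : ℕ => ((leapQ x N : ℝ) : EReal)) atTop
      = -(((2 * α) ^ (-(1 / 2) : ℝ) : ℝ≥0∞) : EReal)}

/-- The fundamental interval `I_σ` associated with the finite sequence `σ 1, …, σ n`. -/
def fundI (n : ℕ) (σ : ℕ → ℕ) : Set ℝ :=
  {x ∈ Icc (0 : ℝ) 1 | ∀ k, 1 ≤ k → k ≤ n → pierceDigit k x = ((σ k : ℕ) : ℕ∞)}

/-- prepend a digit -/
noncomputable def pp (a : ℕ) (w : ℝ) : ℝ := (1 - w) / a

lemma pierceT_zero : pierceT 0 = 0 := by simp [pierceT]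

lemma pp_spec (a : ℕ) (ha : 1 ≤ a) {w : ℝ} (hw0 : 0 < w) (hw : w < 1/((a:ℝ)+1)) :
    1/((a:ℝ)+1) < pp a w ∧ pp a w < 1/(a:ℝ) ∧ pierceT (pp a w) = w ∧ ⌊1/(pp a w)⌋₊ = a := by
  have ha0 : (0:ℝ) < a := by exact_mod_cast ha
  have hwa : w * ((a:ℝ)+1) < 1 := (lt_div_iff₀ (by positivity)).mp hw
  have hlow : 1/((a:ℝ)+1) < pp a w := by
    rw [pp, div_lt_div_iff₀ (by positivity) ha0]
    nlinarith
  have hup : pp a w < 1/(a:ℝ) := by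
    rw [pp, div_lt_div_iff₀ ha0 ha0]
    nlinarith
  have hpp0 : 0 < pp a w := lt_trans (by positivity) hlow
  have hmul : (a:ℝ) * pp a w = 1 - w := by simp only [pp]; field_simp
  have h1 : (a:ℝ) < 1 / pp a w := by
    rw [lt_div_iff₀ hpp0]; nlinarith
  have h2 : 1 / pp a w < (a:ℝ) + 1 := by
    rw [div_lt_iff₀ hpp0]; nlinarith
  have hfl : ⌊1/(pp a w)⌋₊ = a := by
    rw [Nat.floor_eq_iff (by positivity)]
    exact ⟨h1.le, by push_cast; exact h2⟩
  refine ⟨hlow, hup, ?_, hfl⟩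
  rw [pierceT, if_neg hpp0.ne', hfl]
  rw [hmul]; ring

lemma t_key {z : ℝ} (h0 : 0 < z) (h1 : z ≤ 1) :
    1 ≤ ⌊1/z⌋₊ ∧ 0 ≤ pierceT z ∧ pierceT z < 1/((⌊1/z⌋₊:ℝ)+1) ∧
      pp ⌊1/z⌋₊ (pierceT z) = z := by
  set d := ⌊1/z⌋₊ with hd
  have hd1 : 1 ≤ d := Nat.le_floor (by push_cast; exact one_le_one_div h0 h1)
  have hd1R : (1:ℝ) ≤ d := by exact_mod_cast hd1
  have hdl : (d:ℝ) ≤ 1/z := Nat.floor_le (by positivity)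
  have hdu : 1/z < (d:ℝ) + 1 := Nat.lt_floor_add_one _
  have hdz : (d:ℝ) * z ≤ 1 := by
    have := mul_le_mul_of_nonneg_right hdl h0.le
    rwa [one_div, inv_mul_cancel₀ h0.ne'] at this
  have hTz : pierceT z = 1 - (d:ℝ) * z := by rw [pierceT, if_neg h0.ne']
  have h2 : 1 < ((d:ℝ)+1) * z := by
    have := (div_lt_iff₀ h0).mp hdu; linarith
  refine ⟨hd1, by rw [hTz]; linarith, ?_, ?_⟩
  · rw [hTz, lt_div_iff₀ (by positivity)]
    nlinarith
  · rw [hTz, pp]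
    field_simp
    ring

lemma orbit_spec {x : ℝ} (hx0 : 0 ≤ x) (hx1 : x ≤ 1) (h : ∀ n, pierceT^[n] x ≠ 0) :
    ∀ n, 0 < pierceT^[n] x ∧ pierceT^[n] x ≤ 1 ∧ n + 1 ≤ ⌊1/(pierceT^[n] x)⌋₊ := by
  intro n
  induction n with
  | zero =>
    have hx : 0 < x := lt_of_le_of_ne hx0 (Ne.symm (by simpa using h 0))
    exact ⟨by simpa using hx, by simpa using hx1, by
      simpa using (t_key hx hx1).1⟩
  | succ n ih =>
    obtain ⟨hz0, hz1, hzd⟩ := ih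
    set z := pierceT^[n] x with hzdef
    obtain ⟨hd1, hT0, hTlt, _⟩ := t_key hz0 hz1
    have hiter : pierceT^[n+1] x = pierceT z := by
      rw [Function.iterate_succ_apply']
    have hdR : ((n:ℝ) + 1) ≤ (⌊1/z⌋₊ : ℝ) := by exact_mod_cast hzd
    have hTne : pierceT z ≠ 0 := by rw [← hiter]; exact h (n+1)
    have hT0' : 0 < pierceT z := lt_of_le_of_ne hT0 (Ne.symm hTne)
    have hbound : pierceT z < 1/((n:ℝ)+2) := by
      calc pierceT z < 1/((⌊1/z⌋₊:ℝ)+1) := hTlt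
      _ ≤ 1/((n:ℝ)+2) := by
          apply one_div_le_one_div_of_le (by positivity)
          linarith
    have hfloor : (n+1) + 1 ≤ ⌊1/(pierceT z)⌋₊ := by
      apply Nat.le_floor
      have h1 : ((n:ℝ)+2) < 1/(pierceT z) := by
        have := one_div_lt_one_div_of_lt hT0' hbound
        rwa [one_div_one_div] at this
      push_cast
      linarith
    have hle1 : 1/((n:ℝ)+2) ≤ 1 := by
      rw [div_le_one (by positivity)]; linarith
    refine ⟨by rw [hiter]; exact hT0', by rw [hiter]; linarith, by rw [hiter]; exact hfloor⟩

lemma orbit_small {x : ℝ} (hx0 : 0 ≤ x) (hx1 : x ≤ 1) (h : ∀ n, pierceT^[n] x ≠ 0) (n : ℕ) :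
    pierceT^[n] x ≤ 1/((⌊1/(pierceT^[n] x)⌋₊ : ℝ)) ∧ pierceT^[n] x ≤ 1/((n:ℝ)+1) := by
  obtain ⟨hz0, hz1, hzd⟩ := orbit_spec hx0 hx1 h n
  set z := pierceT^[n] x
  have hdl : ((⌊1/z⌋₊:ℝ)) ≤ 1/z := Nat.floor_le (by positivity)
  have hdR : ((n:ℝ) + 1) ≤ (⌊1/z⌋₊ : ℝ) := by exact_mod_cast hzd
  have hdpos : (0:ℝ) < (⌊1/z⌋₊:ℝ) := by linarith
  have hdz : (⌊1/z⌋₊:ℝ) * z ≤ 1 := by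
    have := mul_le_mul_of_nonneg_right hdl hz0.le
    rw [one_div] at this ⊢
    rwa [inv_mul_cancel₀ hz0.ne'] at this
  constructor
  · rw [le_div_iff₀ hdpos]; nlinarith
  · rw [le_div_iff₀ (by positivity : (0:ℝ) < (n:ℝ)+1)]
    nlinarith [mul_le_mul_of_nonneg_left hdR hz0.le]

noncomputable def chain (L : List ℕ) (v : ℝ) : ℝ := L.foldr pp v

@[simp] lemma chain_nil (v : ℝ) : chain [] v = v := rfl
@[simp] lemma chain_cons (a : ℕ) (L : List ℕ) (v : ℝ) :
    chain (a :: L) v = pp a (chain L v) := rfl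

lemma chain_spec : ∀ (L : List ℕ) (a lst : ℕ) (v : ℝ),
    (a :: L).getLast? = some lst → List.Chain' (· < ·) (a :: L) → 1 ≤ a → 0 < v →
    v < 1/((lst:ℝ)+1) →
    1/((a:ℝ)+1) < chain (a :: L) v ∧ chain (a :: L) v < 1/(a:ℝ) ∧
      pierceT^[(a :: L).length] (chain (a :: L) v) = v := by
  intro L
  induction L with
  | nil =>
    intro a lst v hlast hchain ha hv0 hv1
    have hlst : lst = a := by simpa using hlast.symm
    rw [hlst] at hv1
    obtain ⟨h1, h2, h3, _⟩ := pp_spec a ha hv0 hv1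
    exact ⟨by simpa using h1, by simpa using h2, by simpa using h3⟩
  | cons c L' ih =>
    intro a lst v hlast hchain ha hv0 hv1
    have hbc : a < c ∧ List.Chain' (· < ·) (c :: L') := by
      exact List.isChain_cons_cons.mp hchain
    have hlast' : (c :: L').getLast? = some lst := by
      rwa [List.getLast?_cons_cons] at hlast
    obtain ⟨hw1, hw2, hw3⟩ := ih c lst v hlast' hbc.2 (by omega) hv0 hv1
    set w := chain (c :: L') v with hw
    have hwlt : w < 1/((a:ℝ)+1) := by
      apply lt_of_lt_of_le hw2
      apply one_div_le_one_div_of_le (by positivity)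
      have : a + 1 ≤ c := hbc.1
      exact_mod_cast this
    have hw0 : 0 < w := lt_trans (by positivity) hw1
    obtain ⟨h1, h2, h3, _⟩ := pp_spec a ha hw0 hwlt
    refine ⟨by simpa [hw] using h1, by simpa [hw] using h2, ?_⟩
    show pierceT^[(c :: L').length + 1] (pp a w) = v
    rw [Function.iterate_succ_apply, h3]
    exact hw3

lemma chain_lip : ∀ (L : List ℕ), (∀ l ∈ L, 1 ≤ l) → ∀ v w : ℝ,
    |chain L v - chain L w| ≤ |v - w| := by
  intro L
  induction L with
  | nil => simp
  | cons a L ih =>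
    intro hL v w
    have ha : (1:ℝ) ≤ a := by exact_mod_cast hL a (by simp)
    have : chain (a :: L) v - chain (a :: L) w = (chain L w - chain L v)/a := by
      simp only [chain_cons, pp]; ring
    rw [this, abs_div, abs_sub_comm (chain L w)]
    have haa : 1 ≤ |(a:ℝ)| := by rw [abs_of_nonneg (by linarith : (0:ℝ) ≤ a)]; exact ha
    calc |chain L v - chain L w| / |(a:ℝ)| ≤ |chain L v - chain L w| :=
          div_le_self (abs_nonneg _) haa
      _ ≤ |v - w| := ih (fun l hl => hL l (by simp [hl])) v w

noncomputable def digList (n : ℕ) (x : ℝ) : List ℕ :=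
  (List.range n).map (fun i => ⌊1/(pierceT^[i] x)⌋₊)

lemma digList_succ (n : ℕ) (x : ℝ) :
    digList (n+1) x = ⌊1/x⌋₊ :: digList n (pierceT x) := by
  simp [digList, List.range_succ_eq_map, List.map_map, Function.comp,
    Function.iterate_succ_apply]

lemma chain_reconstruct : ∀ (n : ℕ) (x : ℝ),
    (∀ i, i < n → 0 < pierceT^[i] x ∧ pierceT^[i] x ≤ 1) →
    chain (digList n x) (pierceT^[n] x) = x := by
  intro n
  induction n with
  | zero => intro x _; simp [digList]
  | succ n ih =>
    intro x hx
    have hx0 := hx 0 (by omega)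
    simp only [Function.iterate_zero_apply] at hx0
    rw [digList_succ, chain_cons, Function.iterate_succ_apply,
      ih (pierceT x) (fun i hi => by
        rw [← Function.iterate_succ_apply]
        exact hx (i+1) (by omega))]
    exact (t_key hx0.1 hx0.2).2.2.2

lemma dig_step {x : ℝ} (hx0 : 0 ≤ x) (hx1 : x ≤ 1) (h : ∀ n, pierceT^[n] x ≠ 0) (n : ℕ) :
    ⌊1/(pierceT^[n] x)⌋₊ + 1 ≤ ⌊1/(pierceT^[n+1] x)⌋₊ := by
  obtain ⟨hz0, hz1, _⟩ := orbit_spec hx0 hx1 h n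
  obtain ⟨hd1, hT0, hTlt, _⟩ := t_key hz0 hz1
  have hTne := h (n+1)
  rw [Function.iterate_succ_apply'] at hTne
  have hT0' : 0 < pierceT (pierceT^[n] x) := lt_of_le_of_ne hT0 (Ne.symm hTne)
  rw [Function.iterate_succ_apply']
  apply Nat.le_floor
  have h2 := one_div_lt_one_div_of_lt hT0' hTlt
  rw [one_div_one_div] at h2
  push_cast
  linarith

lemma dig_mono {x : ℝ} (hx0 : 0 ≤ x) (hx1 : x ≤ 1) (h : ∀ n, pierceT^[n] x ≠ 0)
    (m k : ℕ) : ⌊1/(pierceT^[m] x)⌋₊ + k ≤ ⌊1/(pierceT^[m+k] x)⌋₊ := by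
  induction k with
  | zero => simp
  | succ k ih =>
    have h2 := dig_step hx0 hx1 h (m+k)
    have h3 : m + (k+1) = (m+k)+1 := by omega
    rw [h3]
    omega

lemma digList_ge_one {x : ℝ} (hx0 : 0 ≤ x) (hx1 : x ≤ 1)
    (h : ∀ n, pierceT^[n] x ≠ 0) (n : ℕ) :
    ∀ l ∈ digList n x, 1 ≤ l := by
  intro l hl
  rw [digList, List.mem_map] at hl
  obtain ⟨i, _, rfl⟩ := hl
  have := (orbit_spec hx0 hx1 h i).2.2
  omega

lemma eq_of_dig_eq {x y : ℝ} (hx0 : 0 ≤ x) (hx1 : x ≤ 1) (hxo : ∀ n, pierceT^[n] x ≠ 0)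
    (hy0 : 0 ≤ y) (hy1 : y ≤ 1) (hyo : ∀ n, pierceT^[n] y ≠ 0)
    (hd : ∀ n, ⌊1/(pierceT^[n] x)⌋₊ = ⌊1/(pierceT^[n] y)⌋₊) : x = y := by
  have key : ∀ n : ℕ, |x - y| ≤ 1/((n:ℝ)+1) := by
    intro n
    have hRx := chain_reconstruct n x
      (fun i _ => ⟨(orbit_spec hx0 hx1 hxo i).1, (orbit_spec hx0 hx1 hxo i).2.1⟩)
    have hRy := chain_reconstruct n y
      (fun i _ => ⟨(orbit_spec hy0 hy1 hyo i).1, (orbit_spec hy0 hy1 hyo i).2.1⟩)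
    have hL : digList n y = digList n x := by
      unfold digList
      exact List.map_congr_left (fun i _ => (hd i).symm)
    rw [hL] at hRy
    have hlip := chain_lip (digList n x) (digList_ge_one hx0 hx1 hxo n)
      (pierceT^[n] x) (pierceT^[n] y)
    rw [hRx, hRy] at hlip
    have hsx := (orbit_small hx0 hx1 hxo n).2
    have hsy := (orbit_small hy0 hy1 hyo n).2
    have hx' := (orbit_spec hx0 hx1 hxo n).1
    have hy' := (orbit_spec hy0 hy1 hyo n).1
    refine le_trans hlip (abs_le.mpr ⟨by linarith, by linarith⟩)
  by_contra hne
  have hpos : 0 < |x - y| := abs_pos.mpr (sub_ne_zero.mpr hne)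
  obtain ⟨n, hn⟩ := exists_nat_one_div_lt hpos
  have := key n
  push_cast at hn
  linarith

/-- the set of points with non-terminating orbit and digit excess bounded by C -/
def NTB (C : ℕ) : Set ℝ :=
  {x | 0 ≤ x ∧ x ≤ 1 ∧ (∀ n, pierceT^[n] x ≠ 0) ∧ ∀ n, ⌊1/(pierceT^[n] x)⌋₊ ≤ n + C}

lemma NTB_countable (C : ℕ) : (NTB C).Countable := by
  classical
  rw [← Set.countable_coe_iff]
  let f : ↥(NTB C) → (Fin (C+1) → Option ℕ) := fun x j =>
    if h : ∃ n, n + 1 + j.1 ≤ ⌊1/(pierceT^[n] (x:ℝ))⌋₊ then some (Nat.find h) else none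
  have hinj : Function.Injective f := by
    intro x y hxy
    have hx := x.2
    have hy := y.2
    obtain ⟨hx0, hx1, hxo, hxb⟩ := hx
    obtain ⟨hy0, hy1, hyo, hyb⟩ := hy
    have hle : ∀ (x' y' : ↥(NTB C)), f x' = f y' → ∀ n,
        ⌊1/(pierceT^[n] (x':ℝ))⌋₊ ≤ ⌊1/(pierceT^[n] (y':ℝ))⌋₊ := by
      intro x' y' hxy' n
      obtain ⟨hx0', hx1', hxo', hxb'⟩ := x'.2
      obtain ⟨hy0', hy1', hyo', hyb'⟩ := y'.2
      have hlow := (orbit_spec hx0' hx1' hxo' n).2.2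
      set j : ℕ := ⌊1/(pierceT^[n] (x':ℝ))⌋₊ - (n+1) with hj
      have hjC : j < C + 1 := by have := hxb' n; omega
      have hwit : n + 1 + j ≤ ⌊1/(pierceT^[n] (x':ℝ))⌋₊ := by omega
      have hex : ∃ m, m + 1 + j ≤ ⌊1/(pierceT^[m] (x':ℝ))⌋₊ := ⟨n, hwit⟩
      have hfx : f x' ⟨j, hjC⟩ = some (Nat.find hex) := by
        simp only [f, dif_pos hex]
      have hfy := hxy' ▸ hfx
      -- f y' ⟨j,_⟩ = some (Nat.find hex)
      by_cases hey : ∃ m, m + 1 + j ≤ ⌊1/(pierceT^[m] (y':ℝ))⌋₊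
      · have hfy2 : f y' ⟨j, hjC⟩ = some (Nat.find hey) := by
          simp only [f, dif_pos hey]
        rw [hfy2] at hfy
        have hfind : Nat.find hey = Nat.find hex := Option.some.inj hfy
        set m := Nat.find hey with hm
        have hspec : m + 1 + j ≤ ⌊1/(pierceT^[m] (y':ℝ))⌋₊ := Nat.find_spec hey
        have hmn : m ≤ n := by
          rw [hfind]
          exact Nat.find_min' hex hwit
        have := dig_mono hy0' hy1' hyo' m (n - m)
        have hmn' : m + (n - m) = n := by omega
        rw [hmn'] at this
        omega
      · exfalso
        have : f y' ⟨j, hjC⟩ = none := by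
          simp only [f, dif_neg hey]
        rw [this] at hfy
        cases hfy
    have hdig : ∀ n, ⌊1/(pierceT^[n] (x:ℝ))⌋₊ = ⌊1/(pierceT^[n] (y:ℝ))⌋₊ :=
      fun n => le_antisymm (hle x y hxy n) (hle y x hxy.symm n)
    exact Subtype.ext (eq_of_dig_eq hx0 hx1 hxo hy0 hy1 hyo hdig)
  exact hinj.countable

lemma rat_terminates : ∀ (p q : ℕ) (x : ℝ), 0 < q → p ≤ q → x = (p:ℝ) / q →
    ∃ m, pierceT^[m] x = 0 := by
  intro p
  induction p using Nat.strong_induction_on with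
  | _ p ih =>
    intro q x hq hpq hx
    by_cases hp : p = 0
    · exact ⟨0, by simp [hx, hp]⟩
    · have hp0 : 0 < p := Nat.pos_of_ne_zero hp
      have hpR : (0:ℝ) < p := by exact_mod_cast hp0
      have hqR : (0:ℝ) < q := by exact_mod_cast hq
      have hx0 : (0:ℝ) < x := by rw [hx]; exact div_pos hpR hqR
      have hnat : p * (q/p) + q % p = q := Nat.div_add_mod q p
      have hcast : ((q/p : ℕ):ℝ) * p + ((q%p : ℕ):ℝ) = q := by
        have := congrArg (Nat.cast : ℕ → ℝ) hnat
        push_cast at this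
        linarith
      have hTx : pierceT x = ((q % p : ℕ):ℝ)/q := by
        rw [pierceT, if_neg hx0.ne']
        have h1x : 1/x = (q:ℝ)/(p:ℕ) := by rw [hx, one_div_div]
        rw [h1x, Nat.floor_div_natCast, Nat.floor_natCast, hx]
        field_simp
        linarith
      have hlt : q % p < p := Nat.mod_lt _ hp0
      have hle : q % p ≤ q := Nat.mod_le _ _
      obtain ⟨m, hm⟩ := ih (q % p) hlt q (pierceT x) hq hle hTx
      exact ⟨m + 1, by rw [Function.iterate_succ_apply, hm]⟩

lemma approx : ∀ (k : ℕ) (t : ℝ), 0 < t → t ≤ 1 →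
    ∃ L : List ℕ, L.head? = some ⌊1/t⌋₊ ∧ List.Chain' (· < ·) L ∧ (∀ l ∈ L, 1 ≤ l) ∧
      |chain L 0 - t| ≤ 1/((⌊1/t⌋₊:ℝ) + k + 1) := by
  intro k
  induction k with
  | zero =>
    intro t ht0 ht1
    obtain ⟨hd1, _, _, _⟩ := t_key ht0 ht1
    set a := ⌊1/t⌋₊ with ha
    have ha0 : (0:ℝ) < a := by exact_mod_cast hd1
    have haR : (1:ℝ) ≤ a := by exact_mod_cast hd1
    have hdl : (a:ℝ) ≤ 1/t := Nat.floor_le (by positivity)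
    have hdu : 1/t < (a:ℝ) + 1 := Nat.lt_floor_add_one _
    have hat : (a:ℝ) * t ≤ 1 := by
      have := mul_le_mul_of_nonneg_right hdl ht0.le
      rwa [one_div, inv_mul_cancel₀ ht0.ne'] at this
    have h2 : 1 < ((a:ℝ)+1) * t := by
      have := (div_lt_iff₀ ht0).mp hdu; linarith
    have hchain1 : chain [a] 0 = 1/(a:ℝ) := by simp [chain, pp]
    refine ⟨[a], rfl, List.isChain_singleton _, by intro l hl; simp at hl; omega, ?_⟩
    rw [hchain1]
    have hkey : 1/(a:ℝ) ≤ 2/((a:ℝ)+1) := by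
      rw [div_le_div_iff₀ ha0 (by positivity)]; nlinarith
    have ht1' : 1/((a:ℝ)+1) < t := by
      rw [div_lt_iff₀ (by positivity)]; nlinarith
    have hta : t ≤ 1/(a:ℝ) := by
      rw [le_div_iff₀ ha0]; linarith
    rw [abs_of_nonneg (by linarith)]
    have hkey2 : 2/((a:ℝ)+1) = 2 * (1/((a:ℝ)+1)) := by ring
    have h9 : 1/(a:ℝ) - t ≤ 1/((a:ℝ)+1) := by linarith
    refine le_trans h9 (le_of_eq (by push_cast; ring))
  | succ k ih =>
    intro t ht0 ht1
    obtain ⟨hd1, hT0, hTlt, hre⟩ := t_key ht0 ht1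
    set a := ⌊1/t⌋₊ with ha
    have haR : (1:ℝ) ≤ a := by exact_mod_cast hd1
    by_cases hT : pierceT t = 0
    · refine ⟨[a], rfl, List.isChain_singleton _, by intro l hl; simp at hl; omega, ?_⟩
      have : chain [a] 0 = t := by
        show pp a 0 = t
        rw [← hT, hre]
      rw [this]
      simp only [sub_self, abs_zero]
      positivity
    · have hT0' : 0 < pierceT t := lt_of_le_of_ne hT0 (Ne.symm hT)
      have hT1 : pierceT t ≤ 1 := by
        refine le_trans hTlt.le ?_
        rw [div_le_one (by positivity)]; linarith
      obtain ⟨L', hhead, hchain, hone, hbound⟩ := ih (pierceT t) hT0' hT1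
      have hfl : (a:ℝ) + 1 ≤ (⌊1/(pierceT t)⌋₊ : ℝ) := by
        have hb : a + 1 ≤ ⌊1/(pierceT t)⌋₊ := by
          apply Nat.le_floor
          have h2 := one_div_lt_one_div_of_lt hT0' hTlt
          rw [one_div_one_div] at h2
          push_cast
          linarith
        exact_mod_cast hb
      refine ⟨a :: L', rfl, ?_, ?_, ?_⟩
      · refine List.isChain_cons.mpr ?_
        refine ⟨?_, hchain⟩
        intro y hy
        rw [hhead] at hy
        simp only [Option.mem_def, Option.some.injEq] at hy
        subst hy
        have : (a:ℝ) < (⌊1/(pierceT t)⌋₊ : ℝ) := by linarith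
        exact_mod_cast this
      · intro l hl
        rcases List.mem_cons.mp hl with h | h
        · omega
        · exact hone l h
      · have hdiff : chain (a :: L') 0 - t = (pierceT t - chain L' 0)/a := by
          have h := hre
          rw [pp] at h
          rw [chain_cons, pp]
          linear_combination h
        rw [hdiff, abs_div, abs_sub_comm]
        have habs : |(a:ℝ)| = a := abs_of_nonneg (by linarith)
        rw [habs]
        have hb2 : |chain L' 0 - pierceT t| ≤ 1/((a:ℝ) + k + 2) := by
          refine le_trans hbound ?_
          apply one_div_le_one_div_of_le (by linarith)
          linarith
        calc |chain L' 0 - pierceT t| / (a:ℝ) ≤ |chain L' 0 - pierceT t| :=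
              div_le_self (abs_nonneg _) haR
          _ ≤ 1/((a:ℝ) + k + 2) := hb2
          _ ≤ 1/((a:ℝ) + ((k+1:ℕ):ℝ) + 1) := le_of_eq (by push_cast; ring)

lemma range'_chain' (m : ℕ) : ∀ s, List.Chain' (· < ·) (List.range' s m) := by
  induction m with
  | zero => intro s; exact List.isChain_nil
  | succ m ih =>
    intro s
    rw [List.range'_succ]; refine List.isChain_cons.mpr ?_
    refine ⟨?_, ih (s+1)⟩
    intro y hy
    cases m with
    | zero => simp at hy
    | succ m =>
      rw [List.range'_succ] at hy
      simp only [Option.mem_def, List.head?_cons, Option.some.injEq] at hy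
      omega

lemma range'_getLast? (m : ℕ) : ∀ s, (List.range' s (m+1)).getLast? = some (s + m) := by
  induction m with
  | zero => intro s; simp [List.range'_succ]
  | succ m ih =>
    intro s
    rw [List.range'_succ, List.range'_succ, List.getLast?_cons_cons, ← List.range'_succ,
      ih (s+1)]
    congr 1
    omega

lemma chain_append (L M : List ℕ) (v : ℝ) : chain (L ++ M) v = chain L (chain M v) :=
  List.foldr_append

lemma main_construct {x : ℝ} (hx0 : 0 ≤ x) (hx1 : x ≤ 1)
    (hxo : ∀ n, pierceT^[n] x ≠ 0)
    (hub : ∀ C : ℕ, ∃ n, n + C ≤ ⌊1/(pierceT^[n] x)⌋₊)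
    (u : ℝ) (hu0 : 0 ≤ u) (hu1 : u ≤ 1) (ε : ℝ) (hε : 0 < ε) :
    ∃ y, 0 ≤ y ∧ y ≤ 1 ∧ |y - u| < ε ∧ ∃ n, pierceT^[n] y = pierceT^[n] x := by
  -- the target point t
  set ε' := min (ε/4) 1 with hε'def
  have hε'0 : 0 < ε' := by positivity
  have hε'4 : ε' ≤ ε/4 := min_le_left _ _
  have hε'1 : ε' ≤ 1 := min_le_right _ _
  set t := max u ε' with htdef
  have ht0 : 0 < t := lt_of_lt_of_le hε'0 (le_max_right _ _)
  have ht1 : t ≤ 1 := max_le hu1 hε'1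
  have htu : |t - u| ≤ ε/4 := by
    rw [abs_of_nonneg (by simp [htdef])]
    have : t ≤ u + ε' := max_le (by linarith) (by linarith)
    linarith
  -- the approximating terminating chain
  set k := ⌈4/ε⌉₊ with hkdef
  have hk : 4/ε ≤ (k:ℝ) := Nat.le_ceil _
  obtain ⟨L, hLhead, hLchain, hLone, hLbound⟩ := approx k t ht0 ht1
  have hLne : L ≠ [] := by
    intro h; rw [h] at hLhead; simp at hLhead
  have hk4 : 4 ≤ (k:ℝ) * ε := (div_le_iff₀ hε).mp hk
  have hstep1 : 1/((⌊1/t⌋₊:ℝ) + k + 1) ≤ 1/((k:ℝ)+1) := by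
    apply one_div_le_one_div_of_le (by positivity)
    have h0 : (0:ℝ) ≤ (⌊1/t⌋₊:ℝ) := by positivity
    linarith
  have hstep2 : 1/((k:ℝ)+1) ≤ ε/4 := by
    rw [div_le_div_iff₀ (by positivity) (by positivity)]
    nlinarith
  have hLb : |chain L 0 - t| ≤ ε/4 := le_trans hLbound (le_trans hstep1 hstep2)
  -- the padding digit A
  set lst := L.getLast hLne with hlstdef
  have hlst : L.getLast? = some lst := List.getLast?_eq_getLast hLne
  set A := max (lst + 1) (⌈4/ε⌉₊ + 1) with hAdef
  have hA1 : 1 ≤ A := by omega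
  have hAlst : lst < A := by omega
  have hA0 : (0:ℝ) < A := by exact_mod_cast hA1
  have hAε : 1/(A:ℝ) ≤ ε/4 := by
    have hAk : (k:ℝ) + 1 ≤ A := by
      have : k + 1 ≤ A := by omega
      exact_mod_cast this
    rw [div_le_div_iff₀ hA0 (by positivity)]
    nlinarith [mul_le_mul_of_nonneg_left hAk hε.le]
  -- choice of n
  obtain ⟨n₀, hn₀⟩ := hub (A + 1 + (L.length + 1))
  set n := max n₀ (L.length + 1) with hndef
  have hnL : L.length + 1 ≤ n := le_max_right _ _
  have hdig : n + A + 1 ≤ ⌊1/(pierceT^[n] x)⌋₊ := by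
    have hmono := dig_mono hx0 hx1 hxo n₀ (n - n₀)
    have hn' : n₀ + (n - n₀) = n := by omega
    rw [hn'] at hmono
    omega
  set p := n - L.length - 1 with hpdef
  have hnp : L.length + (p + 1) = n := by omega
  -- the tail value z
  set z := pierceT^[n] x with hzdef
  have hz0 : 0 < z := (orbit_spec hx0 hx1 hxo n).1
  have hzsmall : z < 1/((A:ℝ) + p + 1) := by
    have h1 := (orbit_small hx0 hx1 hxo n).1
    have h2 : ((A:ℝ) + p + 2) ≤ (⌊1/z⌋₊:ℝ) := by
      have : A + p + 2 ≤ ⌊1/z⌋₊ := by omega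
      exact_mod_cast this
    have hfz : (0:ℝ) < ((A:ℝ)+p+2) := by positivity
    have h3 : 1/((⌊1/z⌋₊:ℝ)) ≤ 1/((A:ℝ)+p+2) :=
      one_div_le_one_div_of_le hfz h2
    have h4 : 1/((A:ℝ)+p+2) < 1/((A:ℝ)+p+1) :=
      one_div_lt_one_div_of_lt (by positivity) (by linarith)
    calc z ≤ 1/((⌊1/z⌋₊:ℝ)) := h1
      _ ≤ 1/((A:ℝ)+p+2) := h3
      _ < 1/((A:ℝ)+p+1) := h4
  -- the pad and full list
  set pad := List.range' A (p+1) with hpaddef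
  have hpadchain : List.Chain' (· < ·) pad := range'_chain' (p+1) A
  have hpadlast : pad.getLast? = some (A + p) := range'_getLast? p A
  have hpadcons : pad = A :: List.range' (A+1) p := List.range'_succ
  have hpadne : pad ≠ [] := by rw [hpadcons]; simp
  -- w = chain pad z
  have hzA : z < 1/(((A+p:ℕ):ℝ) + 1) := by
    push_cast; convert hzsmall using 2
  obtain ⟨hw1, hw2, _⟩ := by
    rw [hpadcons] at hpadchain hpadlast
    exact chain_spec (List.range' (A+1) p) A (A+p) z hpadlast hpadchain hA1 hz0 hzA
  rw [← hpadcons] at hw1 hw2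
  set w := chain pad z with hwdef
  have hw0 : 0 < w := lt_trans (by positivity) hw1
  -- full list
  obtain ⟨a, L'', rfl⟩ : ∃ a L'', L = a :: L'' := List.exists_cons_of_ne_nil hLne
  have ha1 : 1 ≤ a := hLone a (by simp)
  have hLLchain : List.Chain' (· < ·) ((a :: L'') ++ pad) := by
    refine List.isChain_append.mpr ?_
    refine ⟨hLchain, hpadchain, ?_⟩
    intro x' hx' y' hy'
    rw [hlst] at hx'
    rw [hpadcons] at hy'
    simp only [Option.mem_def, Option.some.injEq, List.head?_cons] at hx' hy'
    omega
  have hLLlast : ((a :: L'') ++ pad).getLast? = some (A + p) := by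
    rw [List.getLast?_append_of_ne_nil _ hpadne]
    exact hpadlast
  have hLL : (a :: L'') ++ pad = a :: (L'' ++ pad) := by simp
  rw [hLL] at hLLchain hLLlast
  obtain ⟨hy1, hy2, hy3⟩ :=
    chain_spec (L'' ++ pad) a (A+p) z hLLlast hLLchain ha1 hz0 hzA
  rw [← hLL] at hy1 hy2 hy3
  set y := chain ((a :: L'') ++ pad) z with hydef
  have hyw : y = chain (a :: L'') w := by
    rw [hydef, chain_append]
  have haR : (1:ℝ) ≤ a := by exact_mod_cast ha1
  have hy0 : 0 ≤ y := le_of_lt (lt_trans (by positivity) hy1)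
  have hy1' : y ≤ 1 := by
    refine le_of_lt (lt_of_lt_of_le hy2 ?_)
    rw [div_le_one (by linarith)]
    exact haR
  -- length
  have hlen : ((a :: L'') ++ pad).length = n := by
    rw [List.length_append, List.length_range']
    exact hnp
  rw [hlen] at hy3
  refine ⟨y, hy0, hy1', ?_, n, hy3⟩
  -- error estimate
  have hclose : |y - chain (a :: L'') 0| ≤ ε/4 := by
    rw [hyw]
    refine le_trans (chain_lip _ hLone w 0) ?_
    rw [sub_zero, abs_of_pos hw0]
    linarith
  calc |y - u| ≤ |y - chain (a :: L'') 0| + |chain (a :: L'') 0 - t| + |t - u| := by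
        have := abs_sub_le y (chain (a :: L'') 0) u
        have := abs_sub_le (chain (a :: L'') 0) t u
        linarith [abs_sub_le y (chain (a :: L'') 0) t]
    _ ≤ ε/4 + ε/4 + ε/4 := by
        refine add_le_add (add_le_add hclose hLb) htu
    _ < ε := by linarith

lemma digit_eq_of_iter_eq {x y : ℝ} {n : ℕ} (h : pierceT^[n] y = pierceT^[n] x) :
    ∀ k, n < k → pierceDigit k y = pierceDigit k x := by
  intro k hk
  have hk1 : k - 1 = (k - 1 - n) + n := by omega
  unfold pierceDigit
  rw [hk1, Function.iterate_add_apply, Function.iterate_add_apply, h]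

lemma iter_zero (j : ℕ) : pierceT^[j] (0:ℝ) = 0 := Function.iterate_fixed pierceT_zero j

lemma digit_top_of_term {x : ℝ} {m : ℕ} (hm : pierceT^[m] x = 0) :
    ∀ k, m < k → pierceDigit k x = ⊤ := by
  intro k hk
  have hk1 : k - 1 = (k - 1 - m) + m := by omega
  unfold pierceDigit
  rw [hk1, Function.iterate_add_apply, hm, iter_zero]
  simp [pierceD1]

theorem stmt0 (F : Set ℝ) (hF : F ⊆ Set.Icc 0 1)
    (hinv : ∀ x ∈ F, ∀ n : ℕ, ∀ y ∈ Set.Icc (0 : ℝ) 1,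
      (∀ k, n < k → pierceDigit k y = pierceDigit k x) → y ∈ F) :
    (¬ F.Countable → Set.Icc (0 : ℝ) 1 ⊆ closure F) ∧
    (dimH F ≠ 0 → Set.Icc (0 : ℝ) 1 ⊆ closure F) := by
  have main : ¬ F.Countable → Set.Icc (0 : ℝ) 1 ⊆ closure F := by
    intro hunc u hu
    obtain ⟨hu0, hu1⟩ := hu
    rw [Metric.mem_closure_iff]
    intro ε hε
    by_cases hterm : ∃ x₀ ∈ F, ∃ m, pierceT^[m] x₀ = 0
    · -- some element terminates: all terminating points are in F
      obtain ⟨x₀, hx₀F, m, hm⟩ := hterm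
      set N := ⌈1/ε⌉₊ + 1 with hNdef
      have hN0 : 0 < N := by omega
      have hNR : (0:ℝ) < N := by exact_mod_cast hN0
      have hNε : 1/(N:ℝ) < ε := by
        have h1 : 1/ε ≤ (⌈1/ε⌉₊ : ℝ) := Nat.le_ceil _
        have h2 : ((⌈1/ε⌉₊:ℕ) : ℝ) < N := by
          have : ⌈1/ε⌉₊ < N := by omega
          exact_mod_cast this
        rw [div_lt_iff₀ hNR]
        have h3 : 1/ε < (N:ℝ) := lt_of_le_of_lt h1 h2
        have := (div_lt_iff₀ hε).mp h3
        linarith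
      set P := ⌊u * N⌋₊ with hPdef
      have hPN : P ≤ N := by
        have h1 : u * N ≤ (N:ℝ) := by nlinarith
        have := Nat.floor_le_floor h1
        rwa [Nat.floor_natCast] at this
      set r := (P:ℝ)/N with hrdef
      have hr0 : 0 ≤ r := by positivity
      have hr1 : r ≤ 1 := by
        rw [div_le_one hNR]
        exact_mod_cast hPN
      obtain ⟨mr, hmr⟩ := rat_terminates P N r hN0 hPN rfl
      have hrF : r ∈ F := by
        apply hinv x₀ hx₀F (max m mr) r ⟨hr0, hr1⟩
        intro k hk
        rw [digit_top_of_term hmr k (by omega), digit_top_of_term hm k (by omega)]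
      refine ⟨r, hrF, ?_⟩
      rw [Real.dist_eq]
      have hfl : (P:ℝ) ≤ u * N := Nat.floor_le (by positivity)
      have hfu : u * N < (P:ℝ) + 1 := Nat.lt_floor_add_one _
      have hru : r ≤ u := by
        rw [div_le_iff₀ hNR]
        linarith
      have hur : u - r < 1/N := by
        rw [hrdef, sub_lt_iff_lt_add, ← add_div, lt_div_iff₀ hNR]
        linarith [mul_comm u (N:ℝ)]
      rw [abs_of_nonneg (by linarith)]
      linarith
    · -- no element of F terminates
      push_neg at hterm
      have hnotsub : ¬ (F ⊆ ⋃ (C:ℕ), NTB C) := by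
        intro hsub
        exact hunc ((Set.countable_iUnion NTB_countable).mono hsub)
      obtain ⟨x, hxF, hxB⟩ := Set.not_subset.mp hnotsub
      have hx0 : 0 ≤ x := (hF hxF).1
      have hx1 : x ≤ 1 := (hF hxF).2
      have hxo : ∀ n, pierceT^[n] x ≠ 0 := hterm x hxF
      have hub : ∀ C : ℕ, ∃ n, n + C ≤ ⌊1/(pierceT^[n] x)⌋₊ := by
        intro C
        have hxB' : x ∉ NTB C := fun h => hxB (Set.mem_iUnion.mpr ⟨C, h⟩)
        rw [NTB] at hxB'
        simp only [Set.mem_setOf_eq, not_and] at hxB'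
        have := hxB' hx0 hx1 hxo
        push_neg at this
        obtain ⟨n, hn⟩ := this
        exact ⟨n, by omega⟩
      obtain ⟨y, hy0, hy1, hyu, n, hyn⟩ :=
        main_construct hx0 hx1 hxo hub u hu0 hu1 ε hε
      refine ⟨y, hinv x hxF n y ⟨hy0, hy1⟩ (digit_eq_of_iter_eq hyn), ?_⟩
      rw [Real.dist_eq, abs_sub_comm]
      exact hyu
  exact ⟨main, fun hdim => main (fun hc => hdim hc.dimH_zero)⟩
end

section
/- Let F be a finite replacement-invariant subset of [0,1]. Then for any non-empty open subset U of [0,1] (with its subspace topology from ℝ), the Hausdorff dimension of U ∩ F equals the Hausdorff dimension of F. -/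
open Filter Set Topology MeasureTheory
open scoped ENNReal NNReal

/-- digit (0-indexed) as a natural number -/
noncomputable def apd (j : ℕ) (x : ℝ) : ℕ := ⌊1 / pierceT^[j] x⌋₊

def AGood (x : ℝ) : Prop := Irrational x ∧ 0 < x ∧ x < 1

lemma apd_succ (j : ℕ) (x : ℝ) : apd (j + 1) x = apd j (pierceT x) := by
  simp [apd, Function.iterate_succ_apply]

lemma apd_zero (x : ℝ) : apd 0 x = ⌊1 / x⌋₊ := rfl

lemma AGood.ne_zero {x : ℝ} (h : AGood x) : x ≠ 0 := ne_of_gt h.2.1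

lemma AGood.one_le_apd {x : ℝ} (h : AGood x) : 1 ≤ apd 0 x := by
  have h1 : (1 : ℝ) ≤ 1 / x := by
    rw [le_div_iff₀ h.2.1]; nlinarith [h.2.2]
  exact Nat.le_floor (by exact_mod_cast h1)

lemma AGood.apd_pos {x : ℝ} (h : AGood x) : (0:ℝ) < (apd 0 x : ℝ) := by
  exact_mod_cast Nat.lt_of_lt_of_le Nat.zero_lt_one h.one_le_apd

lemma AGood.floor_lt {x : ℝ} (h : AGood x) : (apd 0 x : ℝ) < 1 / x := by
  have h0 : (0:ℝ) < 1 / x := by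
    rw [one_div]; exact inv_pos.mpr h.2.1
  rcases lt_or_eq_of_le (Nat.floor_le h0.le) with h' | h'
  · exact h'
  · exfalso
    have hdx : (apd 0 x : ℝ) * x = 1 := by
      rw [apd_zero, h', one_div, inv_mul_cancel₀ h.ne_zero]
    apply h.1
    refine ⟨(apd 0 x : ℚ)⁻¹, ?_⟩
    push_cast
    rw [inv_eq_one_div, div_eq_iff (ne_of_gt h.apd_pos)]
    linear_combination -hdx

lemma AGood.apd_mul_lt_one {x : ℝ} (h : AGood x) : (apd 0 x : ℝ) * x < 1 := by
  have := h.floor_lt; rw [lt_div_iff₀ h.2.1] at this; linarith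

lemma AGood.one_lt_succ_mul {x : ℝ} (h : AGood x) : 1 < ((apd 0 x : ℝ) + 1) * x := by
  have := Nat.lt_floor_add_one (1 / x)
  rw [div_lt_iff₀ h.2.1] at this
  rw [apd_zero]; linarith

lemma AGood.pierceT_eq {x : ℝ} (h : AGood x) : pierceT x = 1 - (apd 0 x : ℝ) * x := by
  simp [pierceT, h.ne_zero, apd_zero]

lemma AGood.pierceT_pos {x : ℝ} (h : AGood x) : 0 < pierceT x := by
  rw [h.pierceT_eq]; linarith [h.apd_mul_lt_one]

lemma AGood.pierceT_lt {x : ℝ} (h : AGood x) : pierceT x < ((apd 0 x : ℝ) + 1)⁻¹ := by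
  have hd : (0:ℝ) < (apd 0 x : ℝ) + 1 := by positivity
  rw [h.pierceT_eq, inv_eq_one_div, lt_div_iff₀ hd]
  nlinarith [mul_lt_mul_of_pos_left h.one_lt_succ_mul h.apd_pos]

lemma AGood.pierceT_irrational {x : ℝ} (h : AGood x) : Irrational (pierceT x) := by
  rw [h.pierceT_eq]
  have h1 : Irrational ((apd 0 x : ℝ) * x) :=
    h.1.natCast_mul (Nat.one_le_iff_ne_zero.mp h.one_le_apd)
  simpa using h1.natCast_sub 1

lemma AGood.pierceT_good {x : ℝ} (h : AGood x) : AGood (pierceT x) := by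
  refine ⟨h.pierceT_irrational, h.pierceT_pos, ?_⟩
  calc pierceT x < ((apd 0 x : ℝ) + 1)⁻¹ := h.pierceT_lt
    _ ≤ 1 := by
      rw [inv_le_one_iff₀]; right; linarith [h.apd_pos]

lemma AGood.iter {x : ℝ} (h : AGood x) (j : ℕ) : AGood (pierceT^[j] x) := by
  induction j with
  | zero => exact h
  | succ n ih =>
    rw [Function.iterate_succ_apply']
    exact ih.pierceT_good

lemma AGood.apd_lt_succ {x : ℝ} (h : AGood x) (j : ℕ) : apd j x < apd (j + 1) x := by
  have hg := h.iter j
  have hT : apd (j + 1) x = apd 0 (pierceT (pierceT^[j] x)) := by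
    simp [apd, Function.iterate_succ_apply', apd_zero]
  have hj : apd j x = apd 0 (pierceT^[j] x) := rfl
  rw [hT, hj]
  -- digit of pierceT y is > digit of y for good y
  set y := pierceT^[j] x with hy
  have h1 : pierceT y < ((apd 0 y : ℝ) + 1)⁻¹ := hg.pierceT_lt
  have h2 : 0 < pierceT y := hg.pierceT_pos
  have h3 : ((apd 0 y : ℝ) + 1) ≤ 1 / pierceT y := by
    rw [le_div_iff₀ h2]
    have := mul_lt_mul_of_pos_left h1 (by positivity : (0:ℝ) < (apd 0 y : ℝ) + 1)
    rw [mul_inv_cancel₀ (by positivity : ((apd 0 y : ℝ) + 1) ≠ 0)] at this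
    linarith
  have h4 : apd 0 y + 1 ≤ apd 0 (pierceT y) := Nat.le_floor (by exact_mod_cast h3)
  omega

lemma AGood.apd_add_le {x : ℝ} (h : AGood x) (j k : ℕ) : apd j x + k ≤ apd (j + k) x := by
  induction k with
  | zero => simp
  | succ n ih =>
    have h1 := h.apd_lt_succ (j + n)
    have e : j + (n + 1) = (j + n) + 1 := rfl
    rw [e]
    omega

lemma AGood.succ_le_apd {x : ℝ} (h : AGood x) (j : ℕ) : j + 1 ≤ apd j x := by
  have h1 := h.apd_add_le 0 j
  rw [Nat.zero_add] at h1
  have h2 := h.one_le_apd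
  omega

lemma AGood.pierceT_sub {x y : ℝ} (hx : AGood x) (hy : AGood y) (hd : apd 0 x = apd 0 y) :
    pierceT x - pierceT y = -((apd 0 x : ℝ) * (x - y)) := by
  rw [hx.pierceT_eq, hy.pierceT_eq, ← hd]; ring

lemma agood_iterate_sub_abs (m : ℕ) :
    ∀ (x y : ℝ), AGood x → AGood y → (∀ j < m, apd j x = apd j y) →
    |pierceT^[m] x - pierceT^[m] y| =
      (∏ j ∈ Finset.range m, (apd j x : ℝ)) * |x - y| := by
  induction m with
  | zero => simp
  | succ n ih =>
    intro x y hx hy hd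
    have hd0 : apd 0 x = apd 0 y := hd 0 (Nat.succ_pos n)
    have hTx := hx.pierceT_good
    have hTy := hy.pierceT_good
    have hdT : ∀ j < n, apd j (pierceT x) = apd j (pierceT y) := by
      intro j hj
      rw [← apd_succ, ← apd_succ]
      exact hd (j + 1) (by omega)
    have h1 := ih (pierceT x) (pierceT y) hTx hTy hdT
    rw [Function.iterate_succ_apply, Function.iterate_succ_apply, h1]
    have h2 : |pierceT x - pierceT y| = (apd 0 x : ℝ) * |x - y| := by
      rw [hx.pierceT_sub hy hd0, abs_neg, abs_mul, abs_of_nonneg (by positivity : (0:ℝ) ≤ (apd 0 x : ℝ))]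
    rw [h2]
    have h3 : ∀ j, apd j (pierceT x) = apd (j + 1) x := fun j => (apd_succ j x).symm
    rw [Finset.prod_congr rfl (fun j _ => by rw [h3 j]), Finset.prod_range_succ']
    ring

/-- inverse branch -/
noncomputable def pV (d : ℕ) (t : ℝ) : ℝ := (1 - t) / d

/-- iterated inverse branches: `pW g m t = V_{g 0} (V_{g 1} (... V_{g (m-1)} t))` -/
noncomputable def pW (g : ℕ → ℕ) : ℕ → ℝ → ℝ
  | 0, t => t
  | (m + 1), t => pW g m (pV (g m) t)

lemma pV_sub (d : ℕ) (t t' : ℝ) : pV d t - pV d t' = -((t - t') / d) := by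
  unfold pV; ring

lemma pW_sub_abs (g : ℕ → ℕ) (hg : ∀ j, 1 ≤ g j) (m : ℕ) (t t' : ℝ) :
    |pW g m t - pW g m t'| = |t - t'| / ∏ j ∈ Finset.range m, (g j : ℝ) := by
  induction m generalizing t t' with
  | zero => simp [pW]
  | succ n ih =>
    have hgn : (0:ℝ) < (g n : ℝ) := by exact_mod_cast hg n
    rw [show pW g (n+1) t = pW g n (pV (g n) t) from rfl,
        show pW g (n+1) t' = pW g n (pV (g n) t') from rfl, ih,
        pV_sub, abs_neg, abs_div, abs_of_nonneg hgn.le, Finset.prod_range_succ]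
    field_simp

/-- Main properties of the inverse branch composition. -/
lemma pW_props (g : ℕ → ℕ) (hg0 : 1 ≤ g 0) (hmono : ∀ j, g j < g (j + 1)) :
    ∀ (m : ℕ) (t : ℝ) (B : ℕ), Irrational t → 0 < t → t < (B : ℝ)⁻¹ →
      (m ≠ 0 → g (m - 1) < B) →
      (0 < pW g m t ∧ pW g m t < ((if m = 0 then B else g 0 : ℕ) : ℝ)⁻¹) ∧
      Irrational (pW g m t) ∧
      pierceT^[m] (pW g m t) = t ∧
      ∀ j < m, apd j (pW g m t) = g j := by
  have hg1 : ∀ j, 1 ≤ g j := by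
    intro j
    induction j with
    | zero => exact hg0
    | succ n ih => have := hmono n; omega
  intro m
  induction m with
  | zero =>
    intro t B ht h0 hB _
    refine ⟨⟨h0, by simpa [pW] using hB⟩, ht, rfl, by omega⟩
  | succ n ih =>
    intro t B ht h0 hB hlast
    have hgn1 : (1:ℝ) ≤ (g n : ℝ) := by exact_mod_cast hg1 n
    have hgn0 : (g n : ℝ) ≠ 0 := by linarith
    -- the new innermost value
    set t' : ℝ := pV (g n) t with ht'def
    have hBgn : (g n : ℝ) + 1 ≤ (B : ℝ) := by
      have := hlast (Nat.succ_ne_zero n)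
      simp only [Nat.add_sub_cancel] at this
      exact_mod_cast this
    have htlt : t < ((g n : ℝ) + 1)⁻¹ := by
      calc t < (B : ℝ)⁻¹ := hB
        _ ≤ ((g n : ℝ) + 1)⁻¹ := by
          apply inv_anti₀ (by linarith) hBgn
    -- properties of t'
    have ht'pos : 0 < t' := by
      rw [ht'def]; unfold pV
      apply div_pos _ (by linarith)
      have : t < 1 := lt_of_lt_of_le htlt (by rw [inv_le_one_iff₀]; right; linarith)
      linarith
    have ht'lt : t' < (g n : ℝ)⁻¹ := by
      rw [ht'def]; unfold pV
      rw [div_lt_iff₀ (by linarith : (0:ℝ) < (g n : ℝ)), inv_mul_cancel₀ hgn0]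
      linarith
    have ht'irr : Irrational t' := by
      rw [ht'def]; unfold pV
      have h1 : Irrational (1 - t) := by simpa using ht.natCast_sub 1
      exact h1.div_natCast (Nat.one_le_iff_ne_zero.mp (hg1 n))
    -- apply IH with bound B' := g n
    have hlast' : n ≠ 0 → g (n - 1) < g n := by
      intro hn
      have := hmono (n - 1)
      rwa [Nat.sub_add_cancel (Nat.one_le_iff_ne_zero.mpr hn)] at this
    obtain ⟨⟨hy0, hylt⟩, hyirr, hyiter, hydig⟩ := ih t' (g n) ht'irr ht'pos ht'lt hlast'
    have hWeq : pW g (n + 1) t = pW g n t' := rfl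
    -- t' lies in the branch of digit g n : apd 0 t' = g n and pierceT t' = t
    have ht'good : AGood t' := ⟨ht'irr, ht'pos, by
      calc t' < (g n : ℝ)⁻¹ := ht'lt
        _ ≤ 1 := by rw [inv_le_one_iff₀]; right; exact hgn1⟩
    have hcanc : (g n : ℝ) * ((1 - t) / (g n : ℝ)) = 1 - t := by field_simp
    have hfloor : apd 0 t' = g n := by
      have hle : (g n : ℝ) ≤ 1 / t' := by
        rw [le_div_iff₀ ht'pos, ht'def]
        unfold pV
        rw [hcanc]
        linarith
      have hlt : 1 / t' < (g n : ℝ) + 1 := by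
        rw [div_lt_iff₀ ht'pos, ht'def]
        unfold pV
        have hp : ((g n : ℝ) + 1) * t < 1 := by
          have h1 := mul_lt_mul_of_pos_left htlt (show (0:ℝ) < (g n : ℝ) + 1 by linarith)
          rwa [mul_inv_cancel₀ (show ((g n : ℝ) + 1) ≠ 0 by linarith)] at h1
        rw [← mul_div_assoc, lt_div_iff₀ (by linarith : (0:ℝ) < (g n : ℝ))]
        nlinarith
      rw [apd_zero]
      rw [Nat.floor_eq_iff (by positivity)]
      constructor
      · exact_mod_cast hle
      · exact_mod_cast hlt
    have hTt' : pierceT t' = t := by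
      rw [ht'good.pierceT_eq, hfloor, ht'def]
      unfold pV
      rw [hcanc]
      ring
    refine ⟨⟨by rw [hWeq]; exact hy0, ?_⟩, by rw [hWeq]; exact hyirr, ?_, ?_⟩
    · rw [hWeq]
      rcases Nat.eq_zero_or_pos n with hn | hn
      · subst hn
        simpa using hylt
      · have : ¬ (n = 0) := by omega
        simp only [this, if_false] at hylt
        simpa using hylt
    · rw [hWeq, Function.iterate_succ_apply', hyiter, hTt']
    · intro j hj
      rcases Nat.lt_succ_iff_lt_or_eq.mp hj with hj' | hj'
      · rw [hWeq]; exact hydig j hj'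
      · subst hj'
        rw [hWeq]
        show ⌊1 / pierceT^[j] (pW g j t')⌋₊ = g j
        rw [hyiter]
        exact hfloor

lemma agood_eq_of_apd_eq {x y : ℝ} (hx : AGood x) (hy : AGood y)
    (h : ∀ j, apd j x = apd j y) : x = y := by
  by_contra hne
  have habs : 0 < |x - y| := abs_pos.mpr (sub_ne_zero.mpr hne)
  obtain ⟨m, hm⟩ := exists_nat_gt (1 / |x - y|)
  have hmain := agood_iterate_sub_abs m x y hx hy (fun j _ => h j)
  have hX := hx.iter m
  have hY := hy.iter m
  have hbd : |pierceT^[m] x - pierceT^[m] y| ≤ 1 := by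
    rw [abs_sub_le_iff]
    constructor <;> linarith [hX.2.1, hX.2.2, hY.2.1, hY.2.2]
  have hprodn : m ≤ ∏ j ∈ Finset.range m, apd j x := by
    rcases Nat.eq_zero_or_pos m with h0 | h0
    · subst h0; simp
    · calc m ≤ apd (m - 1) x := le_trans (by omega) (hx.succ_le_apd (m - 1))
        _ ≤ ∏ j ∈ Finset.range m, apd j x := by
            apply Finset.single_le_prod' (f := fun j => apd j x)
            · intro i _
              have h1 := hx.one_le_apd
              have h2 := hx.apd_add_le 0 i
              rw [Nat.zero_add] at h2
              omega
            · exact Finset.mem_range.mpr (by omega)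
  have hprod : (m : ℝ) ≤ ∏ j ∈ Finset.range m, (apd j x : ℝ) := by
    rw [← Nat.cast_prod]
    exact_mod_cast hprodn
  have h1 : (m : ℝ) * |x - y| ≤ 1 := by
    calc (m : ℝ) * |x - y| ≤ (∏ j ∈ Finset.range m, (apd j x : ℝ)) * |x - y| :=
          mul_le_mul_of_nonneg_right hprod (abs_nonneg _)
      _ = |pierceT^[m] x - pierceT^[m] y| := hmain.symm
      _ ≤ 1 := hbd
  rw [div_lt_iff₀ habs] at hm
  linarith

lemma countable_mono_bdd (C : ℕ) :
    {f : ℕ → ℕ | Monotone f ∧ ∀ j, f j ≤ C}.Countable := by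
  rw [Set.countable_coe_iff.symm]
  classical
  refine Function.Injective.countable
    (f := fun f : {f : ℕ → ℕ | Monotone f ∧ ∀ j, f j ≤ C} =>
      (fun i : Fin (C + 2) => if h : ∃ j, (i : ℕ) ≤ f.1 j then some (Nat.find h) else none)) ?_
  intro f g hfg
  have key : ∀ (f g : {f : ℕ → ℕ | Monotone f ∧ ∀ j, f j ≤ C}),
      ((fun i : Fin (C + 2) => if h : ∃ j, (i : ℕ) ≤ f.1 j then some (Nat.find h) else none) =
       (fun i : Fin (C + 2) => if h : ∃ j, (i : ℕ) ≤ g.1 j then some (Nat.find h) else none)) →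
      ∀ j i, i ≤ f.1 j → i ≤ g.1 j := by
    intro f g hfg j i hij
    have hiC : i < C + 2 := by have := f.2.2 j; omega
    have hE : ∃ k, ((⟨i, hiC⟩ : Fin (C + 2)) : ℕ) ≤ f.1 k := ⟨j, hij⟩
    have h1 := congrFun hfg (⟨i, hiC⟩ : Fin (C + 2))
    rw [dif_pos hE] at h1
    by_cases hE' : ∃ k, ((⟨i, hiC⟩ : Fin (C + 2)) : ℕ) ≤ g.1 k
    · rw [dif_pos hE'] at h1
      have h2 : Nat.find hE' ≤ j := by
        rw [← Option.some_inj.mp h1]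
        exact Nat.find_le hij
      exact le_trans (Nat.find_spec hE') (g.2.1 h2)
    · rw [dif_neg hE'] at h1
      exact absurd h1 (by simp)
  apply Subtype.ext
  funext j
  exact le_antisymm (key f g hfg j (f.1 j) le_rfl) (key g f hfg.symm j (g.1 j) le_rfl)

/-- the "bounded digit excess" exceptional set -/
def aE : Set ℝ := {x | AGood x ∧ ∃ C, ∀ j, apd j x ≤ j + C}

lemma aE_countable : aE.Countable := by
  have : aE = ⋃ C : ℕ, {x | AGood x ∧ ∀ j, apd j x ≤ j + C} := by
    ext x; simp only [aE, Set.mem_setOf_eq, Set.mem_iUnion]; tauto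
  rw [this]
  apply Set.countable_iUnion
  intro C
  apply Set.countable_of_injective_of_countable_image
    (f := fun (x : ℝ) (j : ℕ) => apd j x - j)
  · intro x hx y hy hxy
    refine agood_eq_of_apd_eq hx.1 hy.1 (fun j => ?_)
    have h1 : j + 1 ≤ apd j x := hx.1.succ_le_apd j
    have h2 : j + 1 ≤ apd j y := hy.1.succ_le_apd j
    have := congrFun hxy j
    simp only at this
    omega
  · apply Set.Countable.mono _ (countable_mono_bdd C)
    rintro f ⟨x, hx, rfl⟩
    constructor
    · intro a b hab
      simp only
      have h1 : apd a x + (b - a) ≤ apd b x := by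
        have := hx.1.apd_add_le a (b - a)
        rwa [Nat.add_sub_cancel' hab] at this
      have h2 : a + 1 ≤ apd a x := hx.1.succ_le_apd a
      omega
    · intro j
      have := hx.2 j
      simp only
      omega

lemma AGood.lt_inv_apd {x : ℝ} (h : AGood x) : x < ((apd 0 x : ℝ))⁻¹ := by
  rw [inv_eq_one_div, lt_div_iff₀ h.apd_pos]
  have := h.apd_mul_lt_one
  linarith [mul_comm x ((apd 0 x : ℝ))]

lemma AGood.one_le_apd' {x : ℝ} (h : AGood x) (j : ℕ) : 1 ≤ apd j x := by
  have := h.succ_le_apd j; omega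

lemma AGood.le_prod_apd {x : ℝ} (h : AGood x) (m : ℕ) :
    m ≤ ∏ j ∈ Finset.range m, apd j x := by
  rcases Nat.eq_zero_or_pos m with h0 | h0
  · subst h0; simp
  · calc m ≤ apd (m - 1) x := le_trans (by omega) (h.succ_le_apd (m - 1))
      _ ≤ ∏ j ∈ Finset.range m, apd j x := by
          apply Finset.single_le_prod' (f := fun j => apd j x)
          · intro i _; exact h.one_le_apd' i
          · exact Finset.mem_range.mpr (by omega)

lemma irrational_good {x : ℝ} (h : Irrational x) (hx : x ∈ Set.Icc (0:ℝ) 1) : AGood x := by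
  have h0 : x ≠ 0 := by rintro rfl; exact h ⟨0, by norm_num⟩
  have h1 : x ≠ 1 := by rintro rfl; exact h ⟨1, by norm_num⟩
  exact ⟨h, lt_of_le_of_ne hx.1 (Ne.symm h0), lt_of_le_of_ne hx.2 h1⟩

lemma list_range_map_getD (f : ℕ → ℕ) (m i : ℕ) (h : i < m) :
    ((List.range m).map f).getD i 0 = f i := by
  rw [List.getD_eq_getElem _ _ (by simpa using h)]
  simp

lemma not_irrational_countable : {x : ℝ | ¬ Irrational x}.Countable := by
  have : {x : ℝ | ¬ Irrational x} = Set.range ((↑) : ℚ → ℝ) := by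
    ext x; simp [Irrational]
  rw [this]
  exact Set.countable_range _

def aPiece (n : ℕ) (s : ℕ → ℕ) (ρ : List ℕ) : Set ℝ :=
  {x | AGood x ∧ n ≤ ρ.length ∧ (∀ j < ρ.length, apd j x = ρ.getD j 0) ∧
       s (n - 1) + (ρ.length - n) ≤ ρ.getD (ρ.length - 1) 0}

lemma piece_dim_le (F : Set ℝ)
    (hinv : ∀ x ∈ F, ∀ n : ℕ, ∀ y ∈ Set.Icc (0 : ℝ) 1,
      (∀ k, n < k → pierceDigit k y = pierceDigit k x) → y ∈ F)
    (U : Set ℝ) (a b : ℝ) (hsub : Set.Ioo a b ⊆ U)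
    (x0 : ℝ) (hx0 : AGood x0) (hx0a : a < x0) (hx0b : x0 < b)
    (n : ℕ) (hn1 : 1 ≤ n) (hnε : (n : ℝ)⁻¹ < min (x0 - a) (b - x0))
    (ρ : List ℕ) :
    dimH (aPiece n (fun j => apd j x0) ρ ∩ F) ≤ dimH (U ∩ F) := by
  classical
  set s : ℕ → ℕ := fun j => apd j x0 with hs
  set S := aPiece n s ρ ∩ F with hS
  rcases S.eq_empty_or_nonempty with hemp | ⟨z, hz⟩
  · rw [hemp, dimH_empty]; exact zero_le
  set m := ρ.length with hm
  have hzP := hz.1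
  have hnm : n ≤ m := hzP.2.1
  have hm1 : 1 ≤ m := le_trans hn1 hnm
  -- the replacement digit function
  set g : ℕ → ℕ := fun i => if i < n then s i else s (n - 1) + 1 + (i - n) with hg
  have hg0 : 1 ≤ g 0 := by
    simp only [hg, if_pos (show (0:ℕ) < n by omega)]
    exact hx0.one_le_apd' 0
  have hgmono : ∀ i, g i < g (i + 1) := by
    intro i
    simp only [hg]
    by_cases h1 : i + 1 < n
    · rw [if_pos (by omega), if_pos h1]
      exact hx0.apd_lt_succ i
    · by_cases h2 : i < n
      · rw [if_pos h2, if_neg h1]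
        have hi : i = n - 1 := by omega
        have e1 : s i = s (n - 1) := by rw [hi]
        omega
      · rw [if_neg h2, if_neg h1]
        omega
  have hg1 : ∀ j, 1 ≤ g j := by
    intro j
    induction j with
    | zero => exact hg0
    | succ k ih => have := hgmono k; omega
  have hgs : ∀ i < n, g i = s i := by
    intro i hi; simp only [hg, if_pos hi]
  have hglast : g (m - 1) = s (n - 1) + (m - n) := by
    simp only [hg]
    by_cases h1 : m - 1 < n
    · rw [if_pos h1]
      have e1 : m - 1 = n - 1 := by omega
      rw [e1]
      omega
    · rw [if_neg h1]
      omega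
  -- the replacement map
  set hmap : ℝ → ℝ := fun x => pW g m (pierceT^[m] x) with hhmap
  -- properties for each member
  have hkey : ∀ x ∈ S, AGood (hmap x) ∧ hmap x ∈ U ∩ F ∧
      pierceT^[m] (hmap x) = pierceT^[m] x ∧ (∀ j < m, apd j (hmap x) = g j) := by
    intro x hx
    obtain ⟨⟨hxg, _, hxd, hxlast⟩, hxF⟩ := hx
    have htg : AGood (pierceT^[m] x) := hxg.iter m
    have hB0 : apd 0 (pierceT^[m] x) = apd m x := rfl
    have htB : pierceT^[m] x < ((apd m x : ℝ))⁻¹ := by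
      have := htg.lt_inv_apd
      rwa [hB0] at this
    have hlastB : m ≠ 0 → g (m - 1) < apd m x := by
      intro _
      rw [hglast]
      have h1 : s (n - 1) + (m - n) ≤ ρ.getD (m - 1) 0 := hxlast
      have h2 : apd (m - 1) x = ρ.getD (m - 1) 0 := hxd (m - 1) (by omega)
      have h3 : apd (m - 1) x < apd m x := by
        have := hxg.apd_lt_succ (m - 1)
        have e : m - 1 + 1 = m := by omega
        rwa [e] at this
      omega
    obtain ⟨⟨hy0, hylt⟩, hyirr, hyiter, hydig⟩ :=
      pW_props g hg0 hgmono m (pierceT^[m] x) (apd m x) htg.1 htg.2.1 htB hlastB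
    have hmne : ¬ (m = 0) := by omega
    rw [if_neg hmne] at hylt
    have hyle1 : pW g m (pierceT^[m] x) < 1 := by
      calc pW g m (pierceT^[m] x) < ((g 0 : ℕ) : ℝ)⁻¹ := hylt
        _ ≤ 1 := by
          rw [inv_le_one_iff₀]; right; exact_mod_cast hg0
    have hygood : AGood (hmap x) := ⟨hyirr, hy0, hyle1⟩
    have hyIcc : hmap x ∈ Set.Icc (0:ℝ) 1 := ⟨le_of_lt hy0, le_of_lt hyle1⟩
    -- y ∈ F
    have hyF : hmap x ∈ F := by
      apply hinv x hxF m (hmap x) hyIcc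
      intro k hk
      have hiter : pierceT^[k - 1] (hmap x) = pierceT^[k - 1] x := by
        have e : k - 1 = (k - 1 - m) + m := by omega
        rw [e, Function.iterate_add_apply, Function.iterate_add_apply, hyiter]
      unfold pierceDigit
      rw [hiter]
    -- y ∈ U
    have hyU : hmap x ∈ U := by
      apply hsub
      have hdig_eq : ∀ j < n, apd j (hmap x) = apd j x0 := by
        intro j hj
        rw [hydig j (by omega), hgs j hj]
      have habs := agood_iterate_sub_abs n (hmap x) x0 hygood hx0 hdig_eq
      have hbd : |pierceT^[n] (hmap x) - pierceT^[n] x0| ≤ 1 := by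
        have hA := hygood.iter n
        have hB := hx0.iter n
        rw [abs_sub_le_iff]
        constructor <;> linarith [hA.2.1, hA.2.2, hB.2.1, hB.2.2]
      have hprod : (n : ℝ) ≤ ∏ j ∈ Finset.range n, (apd j (hmap x) : ℝ) := by
        rw [← Nat.cast_prod]
        exact_mod_cast hygood.le_prod_apd n
      have hn0 : (0:ℝ) < n := by exact_mod_cast hn1
      have h1 : (n : ℝ) * |hmap x - x0| ≤ 1 := by
        calc (n : ℝ) * |hmap x - x0|
            ≤ (∏ j ∈ Finset.range n, (apd j (hmap x) : ℝ)) * |hmap x - x0| :=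
              mul_le_mul_of_nonneg_right hprod (abs_nonneg _)
          _ = |pierceT^[n] (hmap x) - pierceT^[n] x0| := habs.symm
          _ ≤ 1 := hbd
      have h2 : |hmap x - x0| ≤ (n : ℝ)⁻¹ := by
        rw [inv_eq_one_div, le_div_iff₀ hn0]
        linarith [h1, mul_comm |hmap x - x0| (n : ℝ)]
      have h3 : |hmap x - x0| < min (x0 - a) (b - x0) := lt_of_le_of_lt h2 hnε
      rw [abs_sub_lt_iff] at h3
      constructor
      · have := h3.2; have := min_le_left (x0 - a) (b - x0); linarith [min_le_left (x0 - a) (b - x0)]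
      · have := h3.1; linarith [min_le_right (x0 - a) (b - x0)]
    exact ⟨hygood, ⟨hyU, hyF⟩, hyiter, hydig⟩
  -- the map scales distances by the constant K
  have hz1 : ∀ j < m, 1 ≤ ρ.getD j 0 := by
    intro j hj
    rw [← hzP.2.2.1 j hj]
    exact hzP.1.one_le_apd' j
  set Kρ : ℝ := ∏ j ∈ Finset.range m, (ρ.getD j 0 : ℝ) with hKρ
  set Kg : ℝ := ∏ j ∈ Finset.range m, (g j : ℝ) with hKg
  have hKρpos : 0 < Kρ := by
    apply Finset.prod_pos
    intro j hj
    have := hz1 j (Finset.mem_range.mp hj)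
    exact_mod_cast Nat.lt_of_lt_of_le Nat.zero_lt_one this
  have hKgpos : 0 < Kg := by
    apply Finset.prod_pos
    intro j _
    exact_mod_cast Nat.lt_of_lt_of_le Nat.zero_lt_one (hg1 j)
  set K : ℝ := Kρ / Kg with hK
  have hKpos : 0 < K := div_pos hKρpos hKgpos
  have hdist : ∀ x ∈ S, ∀ x' ∈ S, dist (hmap x) (hmap x') = K * dist x x' := by
    intro x hx x' hx'
    obtain ⟨⟨hxg, _, hxd, _⟩, _⟩ := hx
    obtain ⟨⟨hx'g, _, hx'd, _⟩, _⟩ := hx'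
    have hdd : ∀ j < m, apd j x = apd j x' := by
      intro j hj; rw [hxd j hj, hx'd j hj]
    rw [Real.dist_eq, Real.dist_eq]
    have e1 : |hmap x - hmap x'| = |pierceT^[m] x - pierceT^[m] x'| / Kg := by
      simp only [hhmap]
      rw [pW_sub_abs g hg1 m]
    have e2 := agood_iterate_sub_abs m x x' hxg hx'g hdd
    have e3 : (∏ j ∈ Finset.range m, (apd j x : ℝ)) = Kρ := by
      rw [hKρ]
      exact Finset.prod_congr rfl (fun j hj => by rw [hxd j (Finset.mem_range.mp hj)])
    rw [e1, e2, e3, hK]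
    ring
  have hinj : S.InjOn hmap := by
    intro x hx x' hx' he
    have h1 := hdist x hx x' hx'
    rw [he, dist_self] at h1
    have h2 : dist x x' = 0 := by
      rcases mul_eq_zero.mp h1.symm with h | h
      · exact absurd h hKpos.ne'
      · exact h
    exact dist_eq_zero.mp h2
  have himg : hmap '' S ⊆ U ∩ F := by
    rintro _ ⟨x, hx, rfl⟩
    exact (hkey x hx).2.1
  have hlip : LipschitzOnWith (Real.toNNReal K⁻¹) (Function.invFunOn hmap S) (hmap '' S) := by
    apply LipschitzOnWith.of_dist_le_mul
    rintro u ⟨x, hx, rfl⟩ v ⟨x', hx', rfl⟩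
    rw [hinj.leftInvOn_invFunOn hx, hinj.leftInvOn_invFunOn hx',
      Real.coe_toNNReal _ (inv_nonneg.mpr hKpos.le), hdist x hx x' hx',
      ← mul_assoc, inv_mul_cancel₀ hKpos.ne', one_mul]
  calc dimH S = dimH (Function.invFunOn hmap S '' (hmap '' S)) := by
        rw [hinj.invFunOn_image (subset_refl S)]
    _ ≤ dimH (hmap '' S) := hlip.dimH_image_le
    _ ≤ dimH (U ∩ F) := dimH_mono himg

theorem stmt1 (F : Set ℝ) (hF : F ⊆ Set.Icc 0 1)
    (hinv : ∀ x ∈ F, ∀ n : ℕ, ∀ y ∈ Set.Icc (0 : ℝ) 1,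
      (∀ k, n < k → pierceDigit k y = pierceDigit k x) → y ∈ F)
    (U : Set ℝ) (hU : U.Nonempty)
    (hopen : ∃ V : Set ℝ, IsOpen V ∧ U = V ∩ Set.Icc 0 1) :
    dimH (U ∩ F) = dimH F := by
  apply le_antisymm (dimH_mono Set.inter_subset_right)
  obtain ⟨V, hV, hUeq⟩ := hopen
  subst hUeq
  obtain ⟨u, huU⟩ := hU
  have huV : u ∈ V := huU.1
  have huI : u ∈ Set.Icc (0:ℝ) 1 := huU.2
  obtain ⟨ε, hε, hball⟩ := Metric.isOpen_iff.mp hV u huV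
  obtain ⟨a, b, hab, hsub⟩ : ∃ a b : ℝ, a < b ∧ Set.Ioo a b ⊆ V ∩ Set.Icc 0 1 := by
    by_cases hu1 : u < 1
    · refine ⟨u, min (u + ε) 1, lt_min (by linarith) hu1, ?_⟩
      intro z hz
      refine ⟨hball ?_, le_trans huI.1 hz.1.le, (lt_of_lt_of_le hz.2 (min_le_right _ _)).le⟩
      rw [Metric.mem_ball, Real.dist_eq, abs_sub_lt_iff]
      constructor
      · have := lt_of_lt_of_le hz.2 (min_le_left (u + ε) 1); linarith
      · linarith [hz.1]
    · have hu1' : u = 1 := le_antisymm huI.2 (not_lt.mp hu1)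
      refine ⟨max (1 - ε) 0, 1, max_lt (by linarith) one_pos, ?_⟩
      intro z hz
      refine ⟨hball ?_, (le_max_right (1 - ε) 0).trans hz.1.le, hz.2.le⟩
      rw [Metric.mem_ball, Real.dist_eq, hu1', abs_sub_lt_iff]
      constructor
      · linarith [hz.2]
      · have := lt_of_le_of_lt (le_max_left (1 - ε) 0) hz.1; linarith
  obtain ⟨x0, hx0irr, hx0a, hx0b⟩ := exists_irrational_btwn hab
  have hx0mem := hsub ⟨hx0a, hx0b⟩
  have hx0good : AGood x0 := irrational_good hx0irr hx0mem.2
  have hε0pos : (0:ℝ) < min (x0 - a) (b - x0) := lt_min (by linarith) (by linarith)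
  obtain ⟨n0, hn0⟩ := exists_nat_gt (min (x0 - a) (b - x0))⁻¹
  set n : ℕ := n0 + 1 with hn
  have hn1 : 1 ≤ n := by omega
  have hnε : (n : ℝ)⁻¹ < min (x0 - a) (b - x0) := by
    have hpos : (0:ℝ) < n := by positivity
    have h1 : (min (x0 - a) (b - x0))⁻¹ < (n : ℝ) :=
      lt_of_lt_of_le hn0 (by exact_mod_cast Nat.le_succ n0)
    rw [inv_lt_comm₀ hpos hε0pos]
    exact h1
  set s : ℕ → ℕ := fun j => apd j x0 with hs
  have hcover : F ⊆ ({x : ℝ | ¬ Irrational x} ∪ aE) ∪ ⋃ ρ : List ℕ, (aPiece n s ρ ∩ F) := by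
    intro x hxF
    by_cases hirr : Irrational x
    · have hxg : AGood x := irrational_good hirr (hF hxF)
      by_cases hbdd : ∃ C, ∀ j, apd j x ≤ j + C
      · exact Or.inl (Or.inr ⟨hxg, hbdd⟩)
      · push_neg at hbdd
        obtain ⟨j0, hj0⟩ := hbdd (s (n - 1))
        set j := max j0 (n - 1) with hj
        have hexc : j + s (n - 1) + 1 ≤ apd j x := by
          have h1 := hxg.apd_add_le j0 (j - j0)
          rw [Nat.add_sub_cancel' (le_max_left j0 (n - 1)), ← hj] at h1
          have h2 : j0 ≤ j := le_max_left j0 (n - 1)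
          omega
        set m := j + 1 with hmdef
        right
        refine Set.mem_iUnion.mpr ⟨(List.range m).map (fun i => apd i x), ⟨hxg, ?_, ?_, ?_⟩, hxF⟩
        · simp only [List.length_map, List.length_range]
          omega
        · intro i hi
          simp only [List.length_map, List.length_range] at hi
          rw [list_range_map_getD _ _ _ hi]
        · simp only [List.length_map, List.length_range]
          rw [list_range_map_getD _ _ _ (by omega : m - 1 < m)]
          have e : m - 1 = j := by omega
          rw [e]
          omega
    · exact Or.inl (Or.inl hirr)
  calc dimH F
      ≤ dimH (({x : ℝ | ¬ Irrational x} ∪ aE) ∪ ⋃ ρ : List ℕ, (aPiece n s ρ ∩ F)) :=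
        dimH_mono hcover
    _ = max (dimH ({x : ℝ | ¬ Irrational x} ∪ aE))
          (dimH (⋃ ρ : List ℕ, (aPiece n s ρ ∩ F))) := dimH_union _ _
    _ ≤ dimH ((V ∩ Set.Icc 0 1) ∩ F) := by
        apply max_le
        · rw [(not_irrational_countable.union aE_countable).dimH_zero]
          exact zero_le
        · rw [dimH_iUnion]
          exact iSup_le fun ρ =>
            piece_dim_le F hinv (V ∩ Set.Icc 0 1) a b hsub x0 hx0good hx0a hx0b n hn1 hnε ρ
end

section
/- For each α ∈ [0,∞], the set A(α) is dense in [0,1]. -/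
open Filter Set Topology MeasureTheory
open scoped ENNReal NNReal

namespace PierceAux

variable {d : ℕ → ℕ}

def Adm (d : ℕ → ℕ) : Prop := StrictMono d ∧ 1 ≤ d 0

noncomputable def Pd (d : ℕ → ℕ) (n : ℕ) : ℝ := ∏ i ∈ Finset.range (n+1), (d i : ℝ)

noncomputable def Sd (d : ℕ → ℕ) : ℝ := ∑' n, (-1:ℝ)^n * (Pd d n)⁻¹

lemma Adm.le (hd : Adm d) (k : ℕ) : k + 1 ≤ d k := by
  induction k with
  | zero => exact hd.2
  | succ k ih =>
    have h : d k < d (k+1) := hd.1 (by omega)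
    omega

lemma Adm.shift (hd : Adm d) (j : ℕ) : Adm (fun n => d (n + j)) := by
  refine ⟨fun a b hab => hd.1 (by omega), ?_⟩
  have := hd.le j; simpa using by omega

lemma Pd_pos (hd : Adm d) (n : ℕ) : 0 < Pd d n := by
  apply Finset.prod_pos
  intro i _
  have h := hd.le i
  have : (0:ℝ) < (d i : ℝ) := by exact_mod_cast Nat.lt_of_lt_of_le (Nat.zero_lt_succ i) h
  linarith

lemma Pd_ge (hd : Adm d) (n : ℕ) : (2:ℝ)^n ≤ Pd d n := by
  induction n with
  | zero => simpa [Pd] using by exact_mod_cast hd.2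
  | succ n ih =>
    have h2 : (2:ℝ) ≤ (d (n+1) : ℝ) := by exact_mod_cast by have := hd.le (n+1); omega
    have : Pd d (n+1) = Pd d n * (d (n+1) : ℝ) := Finset.prod_range_succ _ _
    rw [this, pow_succ]
    exact mul_le_mul ih h2 (by norm_num) (le_of_lt (Pd_pos hd n))

lemma summable_aux (hd : Adm d) : Summable (fun n => (-1:ℝ)^n * (Pd d n)⁻¹) := by
  apply Summable.of_norm_bounded (g := fun n => ((1:ℝ)/2)^n) summable_geometric_two
  intro n
  have h1 := Pd_pos hd n
  have h2 := Pd_ge hd n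
  rw [norm_mul, norm_pow, norm_neg, norm_one, one_pow, one_mul, Real.norm_eq_abs,
    abs_of_pos (inv_pos.mpr h1)]
  rw [div_pow, one_pow, le_div_iff₀ (by positivity)]
  rw [inv_mul_le_iff₀ h1]
  linarith


lemma alt_pos {a : ℕ → ℝ} (hs : Summable (fun n => (-1:ℝ)^n * a n))
    (hpos : ∀ n, 0 < a n) (hanti : ∀ n, a (n+1) < a n) :
    0 < ∑' n, (-1:ℝ)^n * a n := by
  set f : ℕ → ℝ := fun n => (-1:ℝ)^n * a n with hf
  have he : Summable fun k => f (2*k) :=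
    hs.comp_injective (mul_right_injective₀ (two_ne_zero))
  have ho : Summable fun k => f (2*k+1) :=
    hs.comp_injective (fun x y h => by omega)
  have h1 : ∑' k, f (2*k) + ∑' k, f (2*k+1) = ∑' n, f n := tsum_even_add_odd he ho
  rw [← h1, ← Summable.tsum_add he ho]
  have key : ∀ k, f (2*k) + f (2*k+1) = a (2*k) - a (2*k+1) := by
    intro k
    simp only [hf, pow_succ, pow_mul, neg_one_sq, one_pow, one_mul, neg_one_mul]
    ring
  have hsum : Summable fun k => f (2*k) + f (2*k+1) := he.add ho
  calc (0:ℝ) < a 0 - a 1 := by have := hanti 0; linarith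
    _ = f (2*0) + f (2*0+1) := by rw [key 0]
    _ ≤ ∑' k, (f (2*k) + f (2*k+1)) := by
        apply Summable.le_tsum hsum 0
        intro k _
        rw [key k]
        have := hanti (2*k); linarith

lemma alt_lt {a : ℕ → ℝ} (hs : Summable (fun n => (-1:ℝ)^n * a n))
    (hpos : ∀ n, 0 < a n) (hanti : ∀ n, a (n+1) < a n) :
    ∑' n, (-1:ℝ)^n * a n < a 0 := by
  have hs1 : Summable (fun n => (-1:ℝ)^(n+1) * a (n+1)) := (summable_nat_add_iff 1).mpr hs
  have hs2 : Summable (fun n => (-1:ℝ)^n * a (n+1)) := by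
    have := hs1.neg
    refine this.congr fun n => ?_
    ring
  have h0 : ∑' n, (-1:ℝ)^n * a n = a 0 + ∑' n, (-1:ℝ)^(n+1) * a (n+1) := by
    rw [Summable.tsum_eq_zero_add hs]; simp
  have h1 : ∑' n, (-1:ℝ)^(n+1) * a (n+1) = - ∑' n, (-1:ℝ)^n * a (n+1) := by
    rw [← tsum_neg]
    apply tsum_congr
    intro n
    ring
  have h2 : 0 < ∑' n, (-1:ℝ)^n * a (n+1) :=
    alt_pos hs2 (fun n => hpos (n+1)) (fun n => hanti (n+1))
  rw [h0, h1]; linarith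

lemma Pd_succ' (d : ℕ → ℕ) (n : ℕ) :
    Pd d (n+1) = (Pd (fun i => d (i+1)) n) * (d 0 : ℝ) := by
  simpa [Pd] using Finset.prod_range_succ' (fun i => (d i : ℝ)) (n+1)

lemma Sd_pos (hd : Adm d) : 0 < Sd d :=
  alt_pos (summable_aux hd) (fun n => inv_pos.mpr (Pd_pos hd n)) (fun n => by
    have h1 := Pd_pos hd n
    have h2 : Pd d (n+1) = Pd d n * (d (n+1) : ℝ) := Finset.prod_range_succ _ _
    apply inv_strictAnti₀ h1
    rw [h2]
    have : (1:ℝ) < (d (n+1) : ℝ) := by exact_mod_cast by have := hd.le (n+1); omega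
    nlinarith)

lemma Sd_anti (hd : Adm d) (n : ℕ) : (Pd d (n+1))⁻¹ < (Pd d n)⁻¹ := by
  have h1 := Pd_pos hd n
  have h2 : Pd d (n+1) = Pd d n * (d (n+1) : ℝ) := Finset.prod_range_succ _ _
  apply inv_strictAnti₀ h1
  rw [h2]
  have : (1:ℝ) < (d (n+1) : ℝ) := by exact_mod_cast by have := hd.le (n+1); omega
  nlinarith

lemma Sd_lt (hd : Adm d) : Sd d < ((d 0 : ℝ))⁻¹ := by
  have h := alt_lt (summable_aux hd) (fun n => inv_pos.mpr (Pd_pos hd n)) (Sd_anti hd)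
  simpa [Sd, Pd] using h

lemma T_Sd (hd : Adm d) : 1 - (d 0 : ℝ) * Sd d = Sd (fun n => d (n+1)) := by
  have hd' : Adm (fun n => d (n+1)) := by simpa using hd.shift 1
  have h0 : (0:ℝ) < (d 0 : ℝ) := by exact_mod_cast hd.2
  have hmul : (d 0 : ℝ) * Sd d = ∑' n, (d 0 : ℝ) * ((-1:ℝ)^n * (Pd d n)⁻¹) := by
    rw [Sd, ← tsum_mul_left]
  rw [hmul, Summable.tsum_eq_zero_add ((summable_aux hd).mul_left _)]
  have hfirst : (d 0 : ℝ) * ((-1:ℝ)^0 * (Pd d 0)⁻¹) = 1 := by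
    simp [Pd, Finset.prod_range_one]
    field_simp
  have hrest : ∀ n : ℕ, (d 0 : ℝ) * ((-1:ℝ)^(n+1) * (Pd d (n+1))⁻¹)
      = - ((-1:ℝ)^n * (Pd (fun i => d (i+1)) n)⁻¹) := by
    intro n
    have hp := Pd_pos hd' n
    rw [Pd_succ' d n]
    rw [mul_inv]
    field_simp
    ring
  rw [hfirst, tsum_congr hrest, tsum_neg]
  rw [Sd]
  ring

lemma Sd_gt (hd : Adm d) : ((d 0 : ℝ) + 1)⁻¹ < Sd d := by
  have hd' : Adm (fun n => d (n+1)) := by simpa using hd.shift 1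
  have h0 : (0:ℝ) < (d 0 : ℝ) := by exact_mod_cast hd.2
  have hT := T_Sd hd
  have hlt : Sd (fun n => d (n+1)) < ((d 1 : ℝ))⁻¹ := Sd_lt hd'
  have hd1 : (d 0 : ℝ) + 1 ≤ (d 1 : ℝ) := by
    exact_mod_cast by have := hd.1 (Nat.zero_lt_one); omega
  have hpos1 : (0:ℝ) < (d 0 : ℝ) + 1 := by linarith
  have h2 : ((d 1 : ℝ))⁻¹ ≤ ((d 0 : ℝ) + 1)⁻¹ := by
    apply inv_anti₀ hpos1 hd1
  have h3 : Sd (fun n => d (n+1)) < ((d 0 : ℝ) + 1)⁻¹ := lt_of_lt_of_le hlt h2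
  -- Sd d = (1 - Sd d')/d0
  have hS : Sd d = (1 - Sd (fun n => d (n+1))) / (d 0 : ℝ) := by
    field_simp at hT ⊢
    linarith
  rw [hS, lt_div_iff₀ h0]
  have : ((d 0:ℝ)+1)⁻¹ * (d 0:ℝ) = 1 - ((d 0:ℝ)+1)⁻¹ := by
    field_simp
    ring
  rw [this]
  linarith


lemma floor_inv_Sd (hd : Adm d) : ⌊(1 : ℝ) / Sd d⌋₊ = d 0 := by
  have hpos := Sd_pos hd
  have hlt := Sd_lt hd
  have hgt := Sd_gt hd
  have h0 : (0:ℝ) < (d 0 : ℝ) := by exact_mod_cast hd.2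
  rw [Nat.floor_eq_iff (by positivity)]
  constructor
  · rw [le_div_iff₀ hpos]
    calc (d 0 : ℝ) * Sd d ≤ (d 0 : ℝ) * ((d 0:ℝ))⁻¹ := by nlinarith
      _ = 1 := by field_simp
  · rw [div_lt_iff₀ hpos]
    push_cast
    calc (1:ℝ) = ((d 0:ℝ)+1) * ((d 0:ℝ)+1)⁻¹ := by field_simp
      _ < ((d 0:ℝ)+1) * Sd d := by
          apply mul_lt_mul_of_pos_left hgt (by linarith)

lemma pierceT_Sd (hd : Adm d) : pierceT (Sd d) = Sd (fun n => d (n+1)) := by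
  rw [pierceT, if_neg (ne_of_gt (Sd_pos hd)), floor_inv_Sd hd]
  rw [← T_Sd hd]

lemma pierceT_iter_Sd (hd : Adm d) (k : ℕ) :
    pierceT^[k] (Sd d) = Sd (fun n => d (n+k)) := by
  induction k with
  | zero => simp
  | succ k ih =>
    rw [Function.iterate_succ_apply', ih]
    have := pierceT_Sd (hd.shift k)
    rw [this]
    congr 1
    funext n
    congr 1
    omega

lemma pierceD1_Sd (hd : Adm d) : pierceD1 (Sd d) = ((d 0 : ℕ) : ℕ∞) := by
  rw [pierceD1, if_neg (ne_of_gt (Sd_pos hd)), floor_inv_Sd hd]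

lemma pierceDigit_Sd (hd : Adm d) (k : ℕ) :
    pierceDigit (k+1) (Sd d) = ((d k : ℕ) : ℕ∞) := by
  rw [pierceDigit]
  simp only [Nat.add_sub_cancel]
  rw [pierceT_iter_Sd hd k, pierceD1_Sd (hd.shift k)]
  simp


noncomputable def Lfilt (α : ℝ≥0∞) : Filter ℝ := if α = ⊤ then atTop else 𝓝 α.toReal

def Gcond (α : ℝ≥0∞) (d : ℕ → ℕ) : Prop :=
  Tendsto (fun k : ℕ => Real.log (d k) / ((k:ℝ)+1)) atTop (Lfilt α)

lemma mem_pierceA {α : ℝ≥0∞} (hd : Adm d) (hg : Gcond α d) : Sd d ∈ pierceA α := by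
  have h0 : (0:ℝ) < (d 0 : ℝ) := by exact_mod_cast hd.2
  have h1 : ((d 0:ℝ))⁻¹ ≤ 1 := by
    rw [inv_le_one_iff₀]
    right
    exact_mod_cast hd.2
  refine ⟨⟨le_of_lt (Sd_pos hd), le_trans (le_of_lt (Sd_lt hd)) h1⟩, ?_⟩
  rw [← tendsto_add_atTop_iff_nat 1]
  have key : ∀ k : ℕ, enlog (pierceDigit (k+1) (Sd d)) / ((k+1 : ℕ) : ℝ≥0∞)
      = ENNReal.ofReal (Real.log (d k) / ((k:ℝ)+1)) := by
    intro k
    rw [pierceDigit_Sd hd k, enlog, if_neg (by exact_mod_cast WithTop.natCast_ne_top (d k))]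
    have hu : (WithTop.untopD 0 ((d k : ℕ) : ℕ∞) : ℕ) = d k := rfl
    rw [hu]
    rw [ENNReal.ofReal_div_of_pos (by positivity)]
    congr 1
    rw [← ENNReal.ofReal_natCast (k+1)]
    congr 1
    push_cast
    ring
  refine Tendsto.congr (fun k => (key k).symm) ?_
  by_cases hα : α = ⊤
  · subst hα
    have hg' : Tendsto (fun k : ℕ => Real.log (d k) / ((k:ℝ)+1)) atTop atTop := by
      simpa [Gcond, Lfilt] using hg
    exact ENNReal.tendsto_ofReal_atTop.comp hg'
  · have hg' : Tendsto (fun k : ℕ => Real.log (d k) / ((k:ℝ)+1)) atTop (𝓝 α.toReal) := by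
      simpa [Gcond, Lfilt, hα] using hg
    have := (ENNReal.continuous_ofReal.tendsto _).comp hg'
    rwa [ENNReal.ofReal_toReal hα] at this


noncomputable def rfun (α : ℝ≥0∞) (k : ℕ) : ℝ :=
  if α = ⊤ then ((k:ℝ)+1)^2 else α.toReal * ((k:ℝ)+1)

lemma rfun_nonneg (α : ℝ≥0∞) (k : ℕ) : 0 ≤ rfun α k := by
  rw [rfun]
  split
  · positivity
  · have := ENNReal.toReal_nonneg (a := α)
    positivity

lemma rfun_mono (α : ℝ≥0∞) : Monotone (rfun α) := by
  intro a b hab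
  rw [rfun, rfun]
  have hab' : (a:ℝ) ≤ (b:ℝ) := by exact_mod_cast hab
  split
  · nlinarith
  · have := ENNReal.toReal_nonneg (a := α)
    nlinarith

noncomputable def canon (α : ℝ≥0∞) (m : ℕ) (k : ℕ) : ℕ :=
  m + k + 2 + ⌊Real.exp (rfun α k)⌋₊

lemma canon_strictMono (α : ℝ≥0∞) (m : ℕ) : StrictMono (canon α m) := by
  intro a b hab
  rw [canon, canon]
  have h1 : ⌊Real.exp (rfun α a)⌋₊ ≤ ⌊Real.exp (rfun α b)⌋₊ :=
    Nat.floor_mono (Real.exp_le_exp.mpr (rfun_mono α (le_of_lt hab)))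
  omega

lemma canon_adm (α : ℝ≥0∞) (m : ℕ) : Adm (canon α m) :=
  ⟨canon_strictMono α m, by rw [canon]; omega⟩

lemma canon_ge (α : ℝ≥0∞) (m : ℕ) : m + 1 ≤ canon α m 0 := by rw [canon]; omega

lemma log_div_self_tendsto : Tendsto (fun k : ℕ => Real.log ((k:ℝ)+1) / ((k:ℝ)+1)) atTop (𝓝 0) := by
  have h := Real.isLittleO_log_id_atTop.tendsto_div_nhds_zero
  have hcomp : Tendsto (fun k : ℕ => (k:ℝ)+1) atTop atTop :=
    tendsto_atTop_add_const_right atTop 1 tendsto_natCast_atTop_atTop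
  exact (h.comp hcomp)

lemma herr_tendsto (m : ℕ) :
    Tendsto (fun k : ℕ => Real.log ((m:ℝ)+(k:ℝ)+3) / ((k:ℝ)+1)) atTop (𝓝 0) := by
  have h1 : Tendsto (fun k : ℕ => Real.log ((m:ℝ)+3) / ((k:ℝ)+1)) atTop (𝓝 0) := by
    have h := (tendsto_const_div_atTop_nhds_zero_nat (Real.log ((m:ℝ)+3))).comp
      (tendsto_add_atTop_nat 1)
    refine h.congr fun k => ?_
    simp only [Function.comp]
    push_cast
    ring_nf
  have hub : Tendsto (fun k : ℕ => Real.log ((m:ℝ)+3) / ((k:ℝ)+1)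
      + Real.log ((k:ℝ)+1) / ((k:ℝ)+1)) atTop (𝓝 (0+0)) :=
    h1.add log_div_self_tendsto
  rw [add_zero] at hub
  apply tendsto_of_tendsto_of_tendsto_of_le_of_le tendsto_const_nhds hub
  · intro k
    simp only
    have hk : (0:ℝ) ≤ (k:ℝ) := Nat.cast_nonneg k
    have hm : (0:ℝ) ≤ (m:ℝ) := Nat.cast_nonneg m
    have h2 : (1:ℝ) ≤ (m:ℝ)+(k:ℝ)+3 := by linarith
    have h3 : 0 ≤ Real.log ((m:ℝ)+(k:ℝ)+3) := Real.log_nonneg h2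
    positivity
  · intro k
    simp only
    rw [← add_div]
    have hlog : Real.log ((m:ℝ)+(k:ℝ)+3) ≤ Real.log ((m:ℝ)+3) + Real.log ((k:ℝ)+1) := by
      rw [← Real.log_mul (by positivity) (by positivity)]
      apply Real.log_le_log (by positivity)
      have hk : (0:ℝ) ≤ (k:ℝ) := Nat.cast_nonneg k
      have hm : (0:ℝ) ≤ (m:ℝ) := Nat.cast_nonneg m
      nlinarith
    apply div_le_div_of_nonneg_right hlog (by positivity)


lemma canon_pos (α : ℝ≥0∞) (m k : ℕ) : (0:ℝ) < (canon α m k : ℝ) := by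
  have : 1 ≤ canon α m k := by rw [canon]; omega
  exact_mod_cast this

lemma canon_log_lb (α : ℝ≥0∞) (m k : ℕ) : rfun α k ≤ Real.log (canon α m k) := by
  rw [Real.le_log_iff_exp_le (canon_pos α m k)]
  have h1 := Nat.lt_floor_add_one (Real.exp (rfun α k))
  have h2 : (⌊Real.exp (rfun α k)⌋₊ : ℝ) + 1 ≤ (canon α m k : ℝ) := by
    rw [canon]
    push_cast
    linarith [(Nat.cast_nonneg m : (0:ℝ) ≤ (m:ℕ)), (Nat.cast_nonneg k : (0:ℝ) ≤ (k:ℕ))]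
  linarith

lemma canon_log_ub (α : ℝ≥0∞) (m k : ℕ) :
    Real.log (canon α m k) ≤ rfun α k + Real.log ((m:ℝ)+(k:ℝ)+3) := by
  have h2 : (1:ℝ) ≤ Real.exp (rfun α k) := Real.one_le_exp (rfun_nonneg α k)
  have hfl : (⌊Real.exp (rfun α k)⌋₊ : ℝ) ≤ Real.exp (rfun α k) :=
    Nat.floor_le (by positivity)
  have hub : (canon α m k : ℝ) ≤ Real.exp (rfun α k) * ((m:ℝ)+(k:ℝ)+3) := by
    rw [canon]
    push_cast
    nlinarith [(Nat.cast_nonneg m : (0:ℝ) ≤ (m:ℕ)), (Nat.cast_nonneg k : (0:ℝ) ≤ (k:ℕ))]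
  calc Real.log (canon α m k) ≤ Real.log (Real.exp (rfun α k) * ((m:ℝ)+(k:ℝ)+3)) :=
        Real.log_le_log (canon_pos α m k) hub
    _ = rfun α k + Real.log ((m:ℝ)+(k:ℝ)+3) := by
        rw [Real.log_mul (Real.exp_ne_zero _) (by positivity), Real.log_exp]

lemma canon_gcond (α : ℝ≥0∞) (m : ℕ) : Gcond α (canon α m) := by
  rw [Gcond, Lfilt]
  by_cases hα : α = ⊤
  · rw [if_pos hα]
    have hbase : Tendsto (fun k : ℕ => (k:ℝ)+1) atTop atTop :=
      tendsto_atTop_add_const_right atTop 1 tendsto_natCast_atTop_atTop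
    refine tendsto_atTop_mono (fun k => ?_) hbase
    have hlb := canon_log_lb α m k
    rw [hα, rfun, if_pos rfl] at hlb
    subst hα
    rw [le_div_iff₀ (by positivity)]
    nlinarith
  · rw [if_neg hα]
    have hl : ∀ k : ℕ, α.toReal ≤ Real.log (canon α m k) / ((k:ℝ)+1) := by
      intro k
      have hlb := canon_log_lb α m k
      rw [rfun, if_neg hα] at hlb
      rw [le_div_iff₀ (by positivity)]
      linarith
    have hu : ∀ k : ℕ, Real.log (canon α m k) / ((k:ℝ)+1)
        ≤ α.toReal + Real.log ((m:ℝ)+(k:ℝ)+3) / ((k:ℝ)+1) := by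
      intro k
      have hub := canon_log_ub α m k
      rw [rfun, if_neg hα] at hub
      rw [div_le_iff₀ (by positivity)]
      have : (α.toReal + Real.log ((m:ℝ)+(k:ℝ)+3) / ((k:ℝ)+1)) * ((k:ℝ)+1)
          = α.toReal * ((k:ℝ)+1) + Real.log ((m:ℝ)+(k:ℝ)+3) := by
        field_simp
      rw [this]
      linarith
    have htu : Tendsto (fun k : ℕ => α.toReal + Real.log ((m:ℝ)+(k:ℝ)+3) / ((k:ℝ)+1))
        atTop (𝓝 (α.toReal + 0)) := tendsto_const_nhds.add (herr_tendsto m)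
    rw [add_zero] at htu
    exact tendsto_of_tendsto_of_tendsto_of_le_of_le tendsto_const_nhds htu hl hu


def consd (j : ℕ) (d : ℕ → ℕ) : ℕ → ℕ
  | 0 => j
  | k+1 => d k

lemma consd_shift (j : ℕ) (d : ℕ → ℕ) : (fun n => consd j d (n+1)) = d := rfl

lemma consd_adm (hd : Adm d) (hj : 1 ≤ j) (hjd : j < d 0) : Adm (consd j d) := by
  refine ⟨strictMono_nat_of_lt_succ fun n => ?_, hj⟩
  cases n with
  | zero => exact hjd
  | succ k => exact hd.1 (Nat.lt_succ_self k)

lemma tendsto_ratio : Tendsto (fun k : ℕ => ((k:ℝ)+1)/((k:ℝ)+2)) atTop (𝓝 1) := by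
  have h0 : Tendsto (fun k : ℕ => 1/((k:ℝ)+2)) atTop (𝓝 0) := by
    have h := (tendsto_const_div_atTop_nhds_zero_nat (1:ℝ)).comp (tendsto_add_atTop_nat 2)
    refine h.congr fun k => ?_
    simp only [Function.comp]
    push_cast
    ring_nf
  have h1 : Tendsto (fun k : ℕ => 1 - 1/((k:ℝ)+2)) atTop (𝓝 (1 - 0)) :=
    tendsto_const_nhds.sub h0
  rw [sub_zero] at h1
  refine h1.congr fun k => ?_
  have hk : ((k:ℝ)+2) ≠ 0 := by positivity
  field_simp
  ring

lemma Gcond_consd {α : ℝ≥0∞} {j : ℕ} (hd : Adm d) (hg : Gcond α d) :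
    Gcond α (consd j d) := by
  rw [Gcond, ← tendsto_add_atTop_iff_nat 1]
  have hgoal : ∀ k : ℕ, Real.log (consd j d (k+1)) / (((k+1:ℕ):ℝ)+1)
      = Real.log (d k) / ((k:ℝ)+2) := by
    intro k
    have : consd j d (k+1) = d k := rfl
    rw [this]
    push_cast
    ring_nf
  refine Tendsto.congr (fun k => (hgoal k).symm) ?_
  have hlog0 : ∀ k : ℕ, 0 ≤ Real.log (d k) := by
    intro k
    apply Real.log_nonneg
    exact_mod_cast Nat.one_le_iff_ne_zero.mpr (by have := hd.le k; omega)
  rw [Gcond, Lfilt] at hg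
  rw [Lfilt]
  by_cases hα : α = ⊤
  · rw [if_pos hα] at hg ⊢
    have hhalf : Tendsto (fun k : ℕ => (Real.log (d k) / ((k:ℝ)+1)) / 2) atTop atTop :=
      hg.atTop_div_const (by norm_num)
    refine tendsto_atTop_mono (fun k => ?_) hhalf
    have hk1 : (0:ℝ) < (k:ℝ)+1 := by positivity
    have hk2 : (0:ℝ) < (k:ℝ)+2 := by positivity
    rw [div_div, div_le_div_iff₀ (by positivity) hk2]
    have hk : (0:ℝ) ≤ (k:ℝ) := Nat.cast_nonneg k
    nlinarith [hlog0 k]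
  · rw [if_neg hα] at hg ⊢
    have hmul := hg.mul tendsto_ratio
    rw [mul_one] at hmul
    refine hmul.congr fun k => ?_
    have hk1 : ((k:ℝ)+1) ≠ 0 := by positivity
    field_simp

def Good (α : ℝ≥0∞) (m : ℕ) (x : ℝ) : Prop :=
  ∃ d : ℕ → ℕ, Adm d ∧ m ≤ d 0 ∧ Gcond α d ∧ x = Sd d

lemma Good.mono {α : ℝ≥0∞} {m m' : ℕ} {x : ℝ} (h : m' ≤ m) : Good α m x → Good α m' x :=
  fun ⟨d, h1, h2, h3, h4⟩ => ⟨d, h1, le_trans h h2, h3, h4⟩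

lemma Good.bounds {α : ℝ≥0∞} {m : ℕ} {x : ℝ} (hm : 1 ≤ m) (h : Good α m x) :
    0 < x ∧ x ≤ 1/(m:ℝ) := by
  obtain ⟨d, hd, hmd, _, rfl⟩ := h
  refine ⟨Sd_pos hd, ?_⟩
  have h1 : (0:ℝ) < (m:ℝ) := by exact_mod_cast hm
  have h2 : (m:ℝ) ≤ (d 0 : ℝ) := by exact_mod_cast hmd
  have h3 := Sd_lt hd
  have h4 : ((d 0:ℝ))⁻¹ ≤ ((m:ℝ))⁻¹ := inv_anti₀ h1 h2
  rw [one_div]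
  linarith

lemma good_exists (α : ℝ≥0∞) (m : ℕ) : ∃ x, Good α m x :=
  ⟨Sd (canon α m), canon α m, canon_adm α m, by have := canon_ge α m; omega,
    canon_gcond α m, rfl⟩

lemma approx (α : ℝ≥0∞) : ∀ n : ℕ, ∀ m : ℕ, 1 ≤ m → ∀ t : ℝ,
    t ∈ Icc (0:ℝ) (1/(m:ℝ)) → ∃ x, Good α m x ∧ |x - t| ≤ 1/((m:ℝ) * 2^n) := by
  intro n
  induction n with
  | zero =>
    intro m hm t ht
    obtain ⟨x, hx⟩ := good_exists α m
    obtain ⟨hx1, hx2⟩ := hx.bounds hm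
    refine ⟨x, hx, ?_⟩
    rw [pow_zero, mul_one, abs_le]
    obtain ⟨ht1, ht2⟩ := ht
    constructor <;> linarith
  | succ n ih =>
    intro m hm t ht
    have hm0 : (0:ℝ) < (m:ℝ) := by exact_mod_cast hm
    have hpow : (0:ℝ) < (m:ℝ) * 2^(n+1) := by positivity
    by_cases hsmall : t ≤ 1/((m:ℝ) * 2^(n+1))
    · obtain ⟨x, hx⟩ := good_exists α (m * 2^(n+1))
      have hM1 : 1 ≤ m * 2^(n+1) :=
        Nat.mul_pos (by omega) (pow_pos (by norm_num) (n+1))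
      obtain ⟨hx1, hx2⟩ := hx.bounds hM1
      have hcast : ((m * 2^(n+1) : ℕ) : ℝ) = (m:ℝ) * 2^(n+1) := by push_cast; ring
      rw [hcast] at hx2
      refine ⟨x, hx.mono (Nat.le_mul_of_pos_right m (pow_pos (by norm_num) (n+1))), ?_⟩
      rw [abs_le]
      obtain ⟨ht1, _⟩ := ht
      constructor <;> linarith
    · push_neg at hsmall
      have ht0 : 0 < t := lt_trans (by positivity) hsmall
      set j := ⌊1/t⌋₊ with hj
      have hjt : (j:ℝ) ≤ 1/t := Nat.floor_le (by positivity)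
      have hjt2 : 1/t < (j:ℝ)+1 := Nat.lt_floor_add_one _
      have hmj : m ≤ j := by
        apply Nat.le_floor
        rw [le_div_iff₀ ht0]
        have ht2 := ht.2
        rw [le_div_iff₀ hm0] at ht2
        linarith [mul_comm t (m:ℝ)]
      have hj1 : 1 ≤ j := le_trans hm hmj
      have hj0 : (0:ℝ) < (j:ℝ) := by exact_mod_cast hj1
      have htj : t ≤ 1/(j:ℝ) := by
        rw [le_div_iff₀ hj0]
        rw [le_div_iff₀ ht0] at hjt
        linarith [mul_comm (j:ℝ) t]
      have htj2 : 1/((j:ℝ)+1) < t := by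
        rw [div_lt_iff₀ (by positivity)]
        rw [div_lt_iff₀ ht0] at hjt2
        linarith [mul_comm t ((j:ℝ)+1)]
      set t' := 1 - (j:ℝ) * t with ht'
      have ht'mem : t' ∈ Icc (0:ℝ) (1/((j+1:ℕ):ℝ)) := by
        constructor
        · rw [ht']
          rw [le_div_iff₀ ht0] at hjt
          linarith
        · have hlt : 1/((j:ℝ)+1) ≤ t := le_of_lt htj2
          have h5 : (j:ℝ) * (1/((j:ℝ)+1)) ≤ (j:ℝ) * t := by nlinarith
          have heq : (j:ℝ) * (1/((j:ℝ)+1)) = 1 - 1/((j:ℝ)+1) := by field_simp; ring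
          push_cast
          rw [ht']
          linarith
      obtain ⟨y, hy, herr⟩ := ih (j+1) (by omega) t' ht'mem
      obtain ⟨d, hd, hjd, hG, rfl⟩ := hy
      have hdj : j < d 0 := by omega
      have hadm : Adm (consd j d) := consd_adm hd hj1 hdj
      refine ⟨Sd (consd j d), ⟨consd j d, hadm, hmj, Gcond_consd hd hG, rfl⟩, ?_⟩
      have hT := T_Sd hadm
      rw [consd_shift] at hT
      have hcons0 : consd j d 0 = j := rfl
      rw [hcons0] at hT
      -- Sd (consd j d) = (1 - Sd d)/j ; t = (1 - t')/j
      have hx_eq : Sd (consd j d) = (1 - Sd d)/(j:ℝ) := by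
        field_simp at hT ⊢
        linarith
      have ht_eq : t = (1 - t')/(j:ℝ) := by
        rw [ht']
        field_simp
        ring
      rw [hx_eq, ht_eq]
      rw [div_sub_div_same, abs_div, abs_of_pos hj0]
      rw [div_le_iff₀ hj0]
      have habs : |1 - Sd d - (1 - t')| = |Sd d - t'| := by
        rw [← abs_neg]
        congr 1
        ring
      rw [habs]
      have hcast2 : ((j+1:ℕ):ℝ) = (j:ℝ)+1 := by push_cast; ring
      rw [hcast2] at herr
      calc |Sd d - t'| ≤ 1/(((j:ℝ)+1) * 2^n) := herr
        _ ≤ 1/((m:ℝ) * 2^(n+1)) * (j:ℝ) := by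
            rw [div_mul_eq_mul_div, one_mul, div_le_div_iff₀ (by positivity) (by positivity)]
            have hmjr : (m:ℝ) ≤ (j:ℝ) := by exact_mod_cast hmj
            have h2n : (0:ℝ) < 2^n := by positivity
            have hps : (2:ℝ)^(n+1) = 2^n * 2 := pow_succ 2 n
            have hj1r : (1:ℝ) ≤ (j:ℝ) := by exact_mod_cast hj1
            have key : (m:ℝ)*2 ≤ (j:ℝ)*((j:ℝ)+1) := by nlinarith
            nlinarith [mul_le_mul_of_nonneg_right key h2n.le]

theorem icc_subset (α : ℝ≥0∞) : Set.Icc (0 : ℝ) 1 ⊆ closure (pierceA α) := by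
  intro t ht
  rw [Metric.mem_closure_iff]
  intro ε hε
  obtain ⟨n, hn⟩ := exists_pow_lt_of_lt_one hε (by norm_num : (1:ℝ)/2 < 1)
  obtain ⟨x, hx, herr⟩ := approx α n 1 le_rfl t (by simpa using ht)
  obtain ⟨d, hd, _, hG, rfl⟩ := hx
  refine ⟨Sd d, mem_pierceA hd hG, ?_⟩
  rw [Real.dist_eq, abs_sub_comm]
  calc |Sd d - t| ≤ 1/((1:ℝ) * 2^n) := by simpa using herr
    _ = ((1:ℝ)/2)^n := by rw [one_mul, div_pow, one_pow]
    _ < ε := hn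

end PierceAux

theorem stmt2 (α : ℝ≥0∞) : Set.Icc (0 : ℝ) 1 ⊆ closure (pierceA α) := by
  exact PierceAux.icc_subset α
end

section
/- For any non-empty open subset U of [0,1] (with its subspace topology from ℝ), there exist a positive integer n and a strictly increasing finite sequence σ = (σ₁,…,σ_n) of positive integers such that the fundamental interval I_σ is contained in U. -/
open Filter Set Topology MeasureTheory
open scoped ENNReal NNReal

lemma pierceT_mem (x : ℝ) (hx : x ∈ Icc (0:ℝ) 1) : pierceT x ∈ Icc (0:ℝ) 1 := by
  rcases eq_or_ne x 0 with h | h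
  · simp [h, pierceT_zero]
  · have hx0 : 0 < x := lt_of_le_of_ne hx.1 (Ne.symm h)
    rw [pierceT, if_neg h]
    constructor
    · have h1 : (⌊1 / x⌋₊ : ℝ) ≤ 1 / x := Nat.floor_le (by positivity)
      have := mul_le_mul_of_nonneg_right h1 hx0.le
      rw [div_mul_cancel₀ 1 hx0.ne'] at this
      linarith
    · nlinarith [Nat.cast_nonneg (α := ℝ) ⌊1 / x⌋₊]

lemma pierce_irr_step {x : ℝ} (hx : Irrational x) (h0 : 0 < x) (h1 : x < 1) :
    Irrational (pierceT x) ∧ 0 < pierceT x ∧ pierceT x < 1 ∧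
      ⌊1 / x⌋₊ < ⌊1 / pierceT x⌋₊ ∧ 1 ≤ ⌊1 / x⌋₊ := by
  have hne : x ≠ 0 := h0.ne'
  set m : ℕ := ⌊1 / x⌋₊ with hm
  have hx1 : 1 < 1 / x := by rw [lt_div_iff₀ h0]; linarith
  have hm1 : 1 ≤ m := Nat.le_floor (by exact_mod_cast hx1.le)
  have hle : (m : ℝ) ≤ 1 / x := Nat.floor_le (by positivity)
  have hlt : 1 / x < (m : ℝ) + 1 := by exact_mod_cast Nat.lt_floor_add_one (1 / x)
  have hmx : (m : ℝ) * x ≤ 1 := by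
    have := mul_le_mul_of_nonneg_right hle h0.le
    rwa [div_mul_cancel₀ 1 hne] at this
  have hmxne : (m : ℝ) * x ≠ 1 := by
    intro hcon
    have hmne : (m : ℝ) ≠ 0 := by positivity
    have : x = ((m : ℚ)⁻¹ : ℚ) := by
      push_cast
      field_simp at hcon ⊢
      linarith
    exact hx ⟨(m : ℚ)⁻¹, this.symm⟩
  have hmxlt : (m : ℝ) * x < 1 := lt_of_le_of_ne hmx hmxne
  have hxlow : 1 < ((m : ℝ) + 1) * x := by
    have := mul_lt_mul_of_pos_right hlt h0
    rwa [div_mul_cancel₀ 1 hne] at this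
  have hT : pierceT x = 1 - (m : ℝ) * x := by rw [pierceT, if_neg hne]
  have hT0 : 0 < pierceT x := by rw [hT]; linarith
  have hTlt : pierceT x < 1 / ((m : ℝ) + 1) := by
    rw [hT, lt_div_iff₀ (by positivity)]
    have hm1' : (1:ℝ) ≤ m := by exact_mod_cast hm1
    nlinarith
  have hT1 : pierceT x < 1 := by
    have hmnn : (0:ℝ) ≤ m := by positivity
    have : 1 / ((m : ℝ) + 1) ≤ 1 := by
      rw [div_le_one (by positivity)]; linarith
    linarith
  have hirr : Irrational (pierceT x) := by
    rw [hT]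
    have := (hx.natCast_mul (m := m) (by omega)).natCast_sub 1
    simpa using this
  refine ⟨hirr, hT0, hT1, ?_, hm1⟩
  have hlt1 : ((m:ℝ)+1) * pierceT x < 1 := by
    calc ((m:ℝ)+1) * pierceT x < ((m:ℝ)+1) * (1/((m:ℝ)+1)) :=
          mul_lt_mul_of_pos_left hTlt (by positivity)
      _ = 1 := by field_simp
  have hfl : (m : ℝ) + 1 ≤ 1 / pierceT x := by
    rw [le_div_iff₀ hT0]; linarith
  have : (m + 1 : ℕ) ≤ ⌊1 / pierceT x⌋₊ := Nat.le_floor (by exact_mod_cast hfl)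
  omega

lemma pierce_iter_ne {x : ℝ} {k n : ℕ} (hk : k ≤ n) (h : pierceT^[n] x ≠ 0) :
    pierceT^[k] x ≠ 0 := by
  intro hc
  apply h
  obtain ⟨j, rfl⟩ := Nat.exists_eq_add_of_le hk
  rw [add_comm, Function.iterate_add_apply, hc, Function.iterate_fixed pierceT_zero]

lemma pierce_key (n : ℕ) : ∀ x y : ℝ, x ∈ Icc (0:ℝ) 1 → y ∈ Icc (0:ℝ) 1 →
    pierceT^[n] x ≠ 0 → pierceT^[n] y ≠ 0 →
    (∀ k, 1 ≤ k → k ≤ n + 1 → pierceDigit k x = pierceDigit k y) →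
    |x - y| ≤ 1 / (⌊1 / pierceT^[n] x⌋₊ : ℝ) := by
  induction n with
  | zero =>
    intro x y hx hy hxn hyn hd
    simp only [Function.iterate_zero, id_eq] at hxn hyn ⊢
    have h1 := hd 1 le_rfl le_rfl
    simp only [pierceDigit, Nat.sub_self, Function.iterate_zero, id_eq, pierceD1, if_neg hxn, if_neg hyn] at h1
    have hmm : ⌊1 / x⌋₊ = ⌊1 / y⌋₊ := by exact_mod_cast h1
    set m : ℕ := ⌊1 / x⌋₊ with hm
    have hx0 : 0 < x := lt_of_le_of_ne hx.1 (Ne.symm hxn)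
    have hy0 : 0 < y := lt_of_le_of_ne hy.1 (Ne.symm hyn)
    have hx1 : 1 ≤ 1 / x := by rw [le_div_iff₀ hx0]; linarith [hx.2]
    have hm1 : 1 ≤ m := Nat.le_floor (by exact_mod_cast hx1)
    have hm0 : (0:ℝ) < m := by exact_mod_cast hm1
    have hlex : (m : ℝ) ≤ 1 / x := Nat.floor_le (by positivity)
    have hley : (m : ℝ) ≤ 1 / y := hmm ▸ Nat.floor_le (by positivity)
    have hxle : x ≤ 1 / m := by
      rw [le_div_iff₀ hm0]
      have := mul_le_mul_of_nonneg_right hlex hx0.le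
      rwa [div_mul_cancel₀ 1 hx0.ne', mul_comm] at this
    have hyle : y ≤ 1 / m := by
      rw [le_div_iff₀ hm0]
      have := mul_le_mul_of_nonneg_right hley hy0.le
      rwa [div_mul_cancel₀ 1 hy0.ne', mul_comm] at this
    rw [abs_sub_le_iff]
    constructor <;> linarith
  | succ n ih =>
    intro x y hx hy hxn hyn hd
    have hxne : x ≠ 0 := pierce_iter_ne (Nat.zero_le _) hxn
    have hyne : y ≠ 0 := pierce_iter_ne (Nat.zero_le _) hyn
    have h1 := hd 1 le_rfl (by omega)
    simp only [pierceDigit, Nat.sub_self, Function.iterate_zero, id_eq, pierceD1, if_neg hxne,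
      if_neg hyne] at h1
    have hmm : ⌊1 / x⌋₊ = ⌊1 / y⌋₊ := by exact_mod_cast h1
    set m : ℕ := ⌊1 / x⌋₊ with hm
    have hx0 : 0 < x := lt_of_le_of_ne hx.1 (Ne.symm hxne)
    have hx1 : 1 ≤ 1 / x := by rw [le_div_iff₀ hx0]; linarith [hx.2]
    have hm1 : 1 ≤ m := Nat.le_floor (by exact_mod_cast hx1)
    have hTx : pierceT x = 1 - (m : ℝ) * x := by rw [pierceT, if_neg hxne]
    have hTy : pierceT y = 1 - (m : ℝ) * y := by rw [pierceT, if_neg hyne, ← hmm]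
    have hiterx : ∀ j : ℕ, pierceT^[j] (pierceT x) = pierceT^[j + 1] x := fun j => by
      rw [Function.iterate_succ_apply]
    have hitery : ∀ j : ℕ, pierceT^[j] (pierceT y) = pierceT^[j + 1] y := fun j => by
      rw [Function.iterate_succ_apply]
    have hdig : ∀ k, 1 ≤ k → k ≤ n + 1 → pierceDigit k (pierceT x) = pierceDigit k (pierceT y) := by
      intro k hk1 hk2
      have hk' : k - 1 + 1 = k := by omega
      simp only [pierceDigit, hiterx, hitery, hk']
      have := hd (k + 1) (by omega) (by omega)
      simpa [pierceDigit] using this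
    have hXn : pierceT^[n] (pierceT x) ≠ 0 := by rw [hiterx]; exact hxn
    have hYn : pierceT^[n] (pierceT y) ≠ 0 := by rw [hitery]; exact hyn
    have hres := ih (pierceT x) (pierceT y) (pierceT_mem x hx) (pierceT_mem y hy) hXn hYn hdig
    rw [hiterx] at hres
    have habs : |x - y| ≤ |pierceT x - pierceT y| := by
      rw [hTx, hTy]
      have : (1 - (m : ℝ) * x) - (1 - (m : ℝ) * y) = (m : ℝ) * (y - x) := by ring
      rw [this, abs_mul, abs_sub_comm]
      have hm0 : (1:ℝ) ≤ |(m:ℝ)| := by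
        rw [abs_of_nonneg (by positivity)]; exact_mod_cast hm1
      nlinarith [abs_nonneg (y - x), abs_sub_comm x y]
    calc |x - y| ≤ |pierceT x - pierceT y| := habs
      _ ≤ _ := hres

lemma stmt9_aux (U : Set ℝ) (hU : U.Nonempty)
    (hopen : ∃ V : Set ℝ, IsOpen V ∧ U = V ∩ Set.Icc 0 1) :
    ∃ (n : ℕ) (σ : ℕ → ℕ), 1 ≤ n ∧
      (∀ k, 1 ≤ k → k ≤ n → 0 < σ k) ∧
      (∀ k, 1 ≤ k → k + 1 ≤ n → σ k < σ (k + 1)) ∧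
      {x ∈ Icc (0 : ℝ) 1 | ∀ k, 1 ≤ k → k ≤ n → pierceDigit k x = ((σ k : ℕ) : ℕ∞)} ⊆ U := by
  obtain ⟨V, hV, hUV⟩ := hopen
  obtain ⟨p, hp⟩ := hU
  rw [hUV] at hp
  obtain ⟨hpV, hp0, hp1⟩ := hp
  obtain ⟨ε, hε, hball⟩ := Metric.isOpen_iff.1 hV p hpV
  have hlt : max 0 (p - ε) < min 1 (p + ε) := by
    rw [max_lt_iff, lt_min_iff, lt_min_iff]
    refine ⟨⟨by linarith, by linarith⟩, by linarith, by linarith⟩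
  obtain ⟨x, hxirr, hxlo, hxhi⟩ := exists_irrational_btwn hlt
  have hx0 : 0 < x := lt_of_le_of_lt (le_max_left _ _) hxlo
  have hx1 : x < 1 := lt_of_lt_of_le hxhi (min_le_left _ _)
  have hxV : x ∈ V := by
    apply hball
    rw [Metric.mem_ball, Real.dist_eq, abs_sub_lt_iff]
    constructor
    · have := lt_of_lt_of_le hxhi (min_le_right _ _); linarith
    · have := lt_of_le_of_lt (le_max_right _ _) hxlo; linarith
  obtain ⟨δ, hδ, hballx⟩ := Metric.isOpen_iff.1 hV x hxV
  -- invariant along the orbit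
  have inv : ∀ k, Irrational (pierceT^[k] x) ∧ 0 < pierceT^[k] x ∧ pierceT^[k] x < 1 := by
    intro k
    induction k with
    | zero => exact ⟨hxirr, hx0, hx1⟩
    | succ k ih =>
      rw [Function.iterate_succ_apply']
      obtain ⟨h1, h2, h3, _, _⟩ := pierce_irr_step ih.1 ih.2.1 ih.2.2
      exact ⟨h1, h2, h3⟩
  set σ : ℕ → ℕ := fun k => ⌊1 / pierceT^[k - 1] x⌋₊ with hσ
  have hσpos : ∀ k, 1 ≤ σ k := by
    intro k
    exact (pierce_irr_step (inv (k-1)).1 (inv (k-1)).2.1 (inv (k-1)).2.2).2.2.2.2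
  have hσmono : ∀ k, 1 ≤ k → σ k < σ (k + 1) := by
    intro k hk
    have hk' : k + 1 - 1 = (k - 1) + 1 := by omega
    have := (pierce_irr_step (inv (k-1)).1 (inv (k-1)).2.1 (inv (k-1)).2.2).2.2.2.1
    simpa [hσ, hk', Function.iterate_succ_apply'] using this
  have hσge : ∀ k, 1 ≤ k → k ≤ σ k := by
    intro k
    induction k with
    | zero => omega
    | succ k ih =>
      intro _
      rcases Nat.eq_zero_or_pos k with h | h
      · subst h; exact hσpos 1
      · have := hσmono k h
        have := ih h
        omega
  have hdigx : ∀ k, 1 ≤ k → pierceDigit k x = ((σ k : ℕ) : ℕ∞) := by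
    intro k _
    rw [pierceDigit, pierceD1, if_neg (inv (k-1)).2.1.ne']
  obtain ⟨n, hn⟩ := exists_nat_one_div_lt hδ
  refine ⟨n + 1, σ, by omega, fun k hk _ => hσpos k, fun k hk _ => hσmono k hk, ?_⟩
  intro y hy
  obtain ⟨hyIcc, hyd⟩ := hy
  have hxIcc : x ∈ Icc (0:ℝ) 1 := ⟨hx0.le, hx1.le⟩
  have hxn : pierceT^[n] x ≠ 0 := (inv n).2.1.ne'
  have hyn : pierceT^[n] y ≠ 0 := by
    intro hc
    have := hyd (n + 1) (by omega) le_rfl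
    rw [pierceDigit, Nat.add_sub_cancel, pierceD1, if_pos hc] at this
    exact (by simp : (⊤ : ℕ∞) ≠ ((σ (n+1) : ℕ) : ℕ∞)) this
  have hdeq : ∀ k, 1 ≤ k → k ≤ n + 1 → pierceDigit k x = pierceDigit k y := by
    intro k hk1 hk2
    rw [hdigx k hk1, hyd k hk1 hk2]
  have hkey := pierce_key n x y hxIcc hyIcc hxn hyn hdeq
  have hfl : σ (n + 1) = ⌊1 / pierceT^[n] x⌋₊ := by simp [hσ]
  have hge : (n + 1 : ℝ) ≤ (⌊1 / pierceT^[n] x⌋₊ : ℝ) := by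
    rw [← hfl]; exact_mod_cast hσge (n + 1) (by omega)
  have hbound : |x - y| < δ := by
    have h1 : 1 / (⌊1 / pierceT^[n] x⌋₊ : ℝ) ≤ 1 / ((n : ℝ) + 1) := by
      apply one_div_le_one_div_of_le (by positivity)
      exact_mod_cast hge
    calc |x - y| ≤ 1 / (⌊1 / pierceT^[n] x⌋₊ : ℝ) := hkey
      _ ≤ 1 / ((n : ℝ) + 1) := h1
      _ < δ := hn
  have hyV : y ∈ V := by
    apply hballx
    rw [Metric.mem_ball, Real.dist_eq, abs_sub_comm]
    exact hbound
  rw [hUV]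
  exact ⟨hyV, hyIcc⟩

theorem stmt9 (U : Set ℝ) (hU : U.Nonempty)
    (hopen : ∃ V : Set ℝ, IsOpen V ∧ U = V ∩ Set.Icc 0 1) :
    ∃ (n : ℕ) (σ : ℕ → ℕ), 1 ≤ n ∧
      (∀ k, 1 ≤ k → k ≤ n → 0 < σ k) ∧
      (∀ k, 1 ≤ k → k + 1 ≤ n → σ k < σ (k + 1)) ∧
      fundI n σ ⊆ U := stmt9_aux U hU hopen
end

section
/- Let E be a subset of [0,1]. Then E is dense in [0,1] if and only if I_σ ∩ E ≠ ∅ for every strictly increasing finite sequence σ of positive integers (of any positive length). -/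
open Filter Set Topology MeasureTheory
open scoped ENNReal NNReal

/-! ### Auxiliary lemmas -/

private lemma pdigit_one (x : ℝ) : pierceDigit 1 x = pierceD1 x := rfl

private lemma pdigit_succ (k : ℕ) (hk : 1 ≤ k) (x : ℝ) :
    pierceDigit (k + 1) x = pierceDigit k (pierceT x) := by
  unfold pierceDigit
  have h : k + 1 - 1 = (k - 1) + 1 := by omega
  rw [h, Function.iterate_succ_apply]

private lemma floor_inv_eq {x : ℝ} {A : ℕ} (hA : 1 ≤ A)
    (h1 : 1 / ((A : ℝ) + 1) < x) (h2 : x ≤ 1 / (A : ℝ)) : ⌊1 / x⌋₊ = A := by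
  have hA0 : (0:ℝ) < A := by exact_mod_cast hA
  have hA1 : (0:ℝ) < (A:ℝ) + 1 := by linarith
  have hxpos : 0 < x := lt_trans (by positivity) h1
  rw [Nat.floor_eq_iff' (by omega)]
  constructor
  · rw [le_div_iff₀ hxpos]
    have := (le_div_iff₀ hA0).mp h2
    linarith
  · rw [div_lt_iff₀ hxpos]
    have := (div_lt_iff₀ hA1).mp h1
    push_cast
    linarith

private lemma pD1_eq_iff {x : ℝ} {A : ℕ} (hA : 1 ≤ A) :
    pierceD1 x = (A : ℕ∞) ↔ 1 / ((A : ℝ) + 1) < x ∧ x ≤ 1 / (A : ℝ) := by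
  have hA0 : (0:ℝ) < A := by exact_mod_cast hA
  have hA1 : (0:ℝ) < (A:ℝ) + 1 := by linarith
  constructor
  · intro h
    have hx0 : x ≠ 0 := by
      rintro rfl
      rw [pierceD1, if_pos rfl] at h
      exact (by simp : (⊤ : ℕ∞) ≠ (A : ℕ∞)) h
    rw [pierceD1, if_neg hx0] at h
    have hfl : ⌊1 / x⌋₊ = A := by exact_mod_cast h
    have hxpos : 0 < x := by
      rcases lt_trichotomy x 0 with hneg | hz | hpos
      · exfalso
        have hle : (1:ℝ)/x ≤ 0 := le_of_lt (div_neg_of_pos_of_neg one_pos hneg)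
        rw [Nat.floor_of_nonpos hle] at hfl
        omega
      · exact absurd hz hx0
      · exact hpos
    rw [Nat.floor_eq_iff' (by omega)] at hfl
    obtain ⟨hl, hr⟩ := hfl
    constructor
    · rw [div_lt_iff₀ hA1]
      have := (div_lt_iff₀ hxpos).mp hr
      push_cast at this
      linarith
    · rw [le_div_iff₀ hA0]
      have := (le_div_iff₀ hxpos).mp hl
      linarith
  · rintro ⟨h1, h2⟩
    have hxpos : 0 < x := lt_trans (by positivity) h1
    rw [pierceD1, if_neg (ne_of_gt hxpos), floor_inv_eq hA h1 h2]

private lemma pierceT_mem_s10 {x : ℝ} {A : ℕ} (hA : 1 ≤ A)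
    (h1 : 1 / ((A : ℝ) + 1) < x) (h2 : x ≤ 1 / (A : ℝ)) :
    pierceT x = 1 - (A : ℝ) * x := by
  have hxpos : 0 < x := lt_trans (by positivity) h1
  rw [pierceT, if_neg (ne_of_gt hxpos), floor_inv_eq hA h1 h2]

private lemma fundI_succ_eq (n : ℕ) (hn : 1 ≤ n) (σ : ℕ → ℕ) (hA : 1 ≤ σ 1) :
    fundI (n + 1) σ =
      {x : ℝ | (1 / ((σ 1 : ℝ) + 1) < x ∧ x ≤ 1 / (σ 1 : ℝ)) ∧
        pierceT x ∈ fundI n (fun k => σ (k + 1))} := by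
  have hA0 : (0:ℝ) < (σ 1 : ℝ) := by exact_mod_cast hA
  have hA1 : (0:ℝ) < (σ 1 : ℝ) + 1 := by linarith
  ext x
  simp only [fundI, Set.mem_setOf_eq, Set.mem_sep_iff, Set.mem_Icc]
  constructor
  · rintro ⟨hicc, hd⟩
    have h1 : pierceDigit 1 x = ((σ 1 : ℕ) : ℕ∞) := hd 1 le_rfl (by omega)
    rw [pdigit_one] at h1
    obtain ⟨hx1, hx2⟩ := (pD1_eq_iff hA).mp h1
    have hxpos : 0 < x := lt_trans (by positivity) hx1
    have hT : pierceT x = 1 - (σ 1 : ℝ) * x := pierceT_mem_s10 hA hx1 hx2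
    refine ⟨⟨hx1, hx2⟩, ⟨?_, ?_⟩, ?_⟩
    · rw [hT]
      have := (le_div_iff₀ hA0).mp hx2
      linarith
    · rw [hT]
      nlinarith [mul_pos hA0 hxpos]
    · intro k hk1 hkn
      rw [← pdigit_succ k hk1 x]
      exact hd (k + 1) (by omega) (by omega)
  · rintro ⟨⟨hx1, hx2⟩, hTicc, hTd⟩
    have hxpos : 0 < x := lt_trans (by positivity) hx1
    have hxle1 : x ≤ 1 := le_trans hx2 (by rw [div_le_one hA0]; exact_mod_cast hA)
    refine ⟨⟨le_of_lt hxpos, hxle1⟩, ?_⟩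
    intro k hk1 hkn
    match k, hk1 with
    | 1, _ =>
      rw [pdigit_one]
      exact (pD1_eq_iff hA).mpr ⟨hx1, hx2⟩
    | (j+2), _ =>
      rw [show j + 2 = (j + 1) + 1 from rfl, pdigit_succ (j+1) (by omega) x]
      exact hTd (j+1) (by omega) (by omega)

private lemma fundI_sandwich (n : ℕ) (hn : 1 ≤ n) : ∀ σ : ℕ → ℕ,
    (∀ k, 1 ≤ k → k ≤ n → 0 < σ k) →
    (∀ k, 1 ≤ k → k + 1 ≤ n → σ k < σ (k + 1)) →
    ∃ a b : ℝ,
      1 / ((σ 1 : ℝ) + 1) ≤ a ∧ a < b ∧ b ≤ 1 / (σ 1 : ℝ) ∧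
      b - a ≤ 1 / ((σ n : ℝ) + 1) ∧
      Ioo a b ⊆ fundI n σ ∧ fundI n σ ⊆ Icc a b := by
  induction n, hn using Nat.le_induction with
  | base =>
    intro σ hpos _
    have hA : 1 ≤ σ 1 := hpos 1 le_rfl le_rfl
    have hA0 : (0:ℝ) < (σ 1 : ℝ) := by exact_mod_cast hA
    have hA1 : (0:ℝ) < (σ 1 : ℝ) + 1 := by linarith
    have hAR : (1:ℝ) ≤ (σ 1 : ℝ) := by exact_mod_cast hA
    refine ⟨1 / ((σ 1 : ℝ) + 1), 1 / (σ 1 : ℝ), le_rfl,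
      one_div_lt_one_div_of_lt hA0 (by linarith), le_rfl, ?_, ?_, ?_⟩
    · have key : 1 / (σ 1 : ℝ) ≤ 2 / ((σ 1 : ℝ) + 1) := by
        rw [div_le_div_iff₀ hA0 hA1]
        linarith
      have h2 : 2 / ((σ 1 : ℝ) + 1) = 1 / ((σ 1 : ℝ) + 1) + 1 / ((σ 1 : ℝ) + 1) := by ring
      linarith
    · intro x hx
      constructor
      · constructor
        · have : (0:ℝ) < 1 / ((σ 1 : ℝ) + 1) := by positivity
          linarith [hx.1]
        · have : 1 / (σ 1 : ℝ) ≤ 1 := by rw [div_le_one hA0]; linarith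
          linarith [hx.2]
      · intro k hk1 hk2
        have hk : k = 1 := by omega
        subst hk
        rw [pdigit_one]
        exact (pD1_eq_iff hA).mpr ⟨hx.1, le_of_lt hx.2⟩
    · intro x hx
      have h1 : pierceDigit 1 x = ((σ 1 : ℕ) : ℕ∞) := hx.2 1 le_rfl le_rfl
      rw [pdigit_one] at h1
      obtain ⟨hx1, hx2⟩ := (pD1_eq_iff hA).mp h1
      exact ⟨le_of_lt hx1, hx2⟩
  | succ n hn1 ih =>
    intro σ hpos hinc
    have hA : 1 ≤ σ 1 := hpos 1 le_rfl (by omega)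
    have hA0 : (0:ℝ) < (σ 1 : ℝ) := by exact_mod_cast hA
    have hA1 : (0:ℝ) < (σ 1 : ℝ) + 1 := by linarith
    have hAR : (1:ℝ) ≤ (σ 1 : ℝ) := by exact_mod_cast hA
    set σ' : ℕ → ℕ := fun k => σ (k + 1) with hσ'
    have hpos' : ∀ k, 1 ≤ k → k ≤ n → 0 < σ' k := fun k h1 h2 => hpos (k+1) (by omega) (by omega)
    have hinc' : ∀ k, 1 ≤ k → k + 1 ≤ n → σ' k < σ' (k + 1) := fun k h1 h2 => hinc (k+1) (by omega) (by omega)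
    obtain ⟨a', b', ha'l, hab', hb'u, hlen', hsub', hsup'⟩ := ih σ' hpos' hinc'
    have h12 : σ 1 < σ 2 := hinc 1 le_rfl (by omega)
    have hs2 : ((σ 1 : ℝ) + 1) ≤ (σ' 1 : ℝ) := by
      have hle : σ 1 + 1 ≤ σ' 1 := h12
      exact_mod_cast hle
    have hs20 : (0:ℝ) < (σ' 1 : ℝ) := by linarith
    have hb'A : b' ≤ 1 / ((σ 1 : ℝ) + 1) :=
      le_trans hb'u (one_div_le_one_div_of_le hA1 hs2)
    have ha'0 : 0 < a' := lt_of_lt_of_le (by positivity) ha'l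
    have hb'1 : b' ≤ 1 := by
      have : 1 / (σ' 1 : ℝ) ≤ 1 := by rw [div_le_one hs20]; linarith
      linarith
    refine ⟨(1 - b') / (σ 1 : ℝ), (1 - a') / (σ 1 : ℝ), ?_, ?_, ?_, ?_, ?_, ?_⟩
    · rw [div_le_div_iff₀ hA1 hA0]
      have hb1 : b' * ((σ 1 : ℝ) + 1) ≤ 1 := by
        have := (le_div_iff₀ hA1).mp hb'A
        linarith
      nlinarith
    · rw [div_lt_div_iff₀ hA0 hA0]
      nlinarith
    · rw [div_le_div_iff₀ hA0 hA0]
      nlinarith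
    · have hba : (1 - a') / (σ 1 : ℝ) - (1 - b') / (σ 1 : ℝ) = (b' - a') / (σ 1 : ℝ) := by
        ring
      rw [hba]
      have h1 : (b' - a') / (σ 1 : ℝ) ≤ b' - a' := by
        apply div_le_self (by linarith) hAR
      have h2 : b' - a' ≤ 1 / ((σ' n : ℝ) + 1) := hlen'
      have h3 : (σ' n : ℝ) = (σ (n+1) : ℝ) := by simp [hσ']
      rw [h3] at h2
      linarith
    · intro x hx
      obtain ⟨hxa, hxb⟩ := hx
      have hx1 : 1 / ((σ 1 : ℝ) + 1) < x := by
        apply lt_of_le_of_lt _ hxa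
        rw [div_le_div_iff₀ hA1 hA0]
        have hb1 : b' * ((σ 1 : ℝ) + 1) ≤ 1 := by
          have := (le_div_iff₀ hA1).mp hb'A
          linarith
        nlinarith
      have hx2 : x ≤ 1 / (σ 1 : ℝ) := by
        apply le_of_lt (lt_of_lt_of_le hxb _)
        rw [div_le_div_iff₀ hA0 hA0]
        nlinarith
      rw [fundI_succ_eq n hn1 σ hA]
      refine ⟨⟨hx1, hx2⟩, ?_⟩
      rw [pierceT_mem_s10 hA hx1 hx2]
      apply hsub'
      constructor
      · have := (lt_div_iff₀ hA0).mp hxb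
        nlinarith
      · have := (div_lt_iff₀ hA0).mp hxa
        nlinarith
    · intro x hx
      rw [fundI_succ_eq n hn1 σ hA] at hx
      obtain ⟨⟨hx1, hx2⟩, hT⟩ := hx
      rw [pierceT_mem_s10 hA hx1 hx2] at hT
      obtain ⟨hTa, hTb⟩ := hsup' hT
      constructor
      · rw [div_le_iff₀ hA0]
        linarith
      · rw [le_div_iff₀ hA0]
        linarith

private lemma irr_step {y : ℝ} (hy : Irrational y) (h0 : 0 < y) (h1 : y < 1) :
    1 ≤ ⌊1/y⌋₊ ∧ Irrational (pierceT y) ∧ 0 < pierceT y ∧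
      pierceT y < 1 / ((⌊1/y⌋₊ : ℝ) + 1) := by
  have hy1 : 1 < 1 / y := one_lt_one_div h0 h1
  have hA1 : 1 ≤ ⌊1/y⌋₊ := Nat.le_floor (by exact_mod_cast hy1.le)
  set A := ⌊1/y⌋₊ with hAdef
  have hA0 : (0:ℝ) < (A:ℝ) := by exact_mod_cast hA1
  have hAp1 : (0:ℝ) < (A:ℝ) + 1 := by linarith
  have hfl : (A:ℝ) ≤ 1/y := Nat.floor_le (by positivity)
  have hfl2 : 1/y < (A:ℝ) + 1 := by
    have := Nat.lt_floor_add_one (1/y)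
    push_cast at this
    linarith
  have hAy : (A:ℝ) * y ≤ 1 := by
    have := (le_div_iff₀ h0).mp hfl
    linarith
  have hne : (A:ℝ) * y ≠ 1 := by
    intro h
    apply hy
    refine ⟨(A:ℚ)⁻¹, ?_⟩
    have hAne : (A:ℝ) ≠ 0 := ne_of_gt hA0
    push_cast
    rw [inv_eq_one_div, eq_comm, eq_div_iff hAne]
    linarith
  have hAylt : (A:ℝ) * y < 1 := lt_of_le_of_ne hAy hne
  have hgt : 1 < ((A:ℝ) + 1) * y := by
    have := (div_lt_iff₀ h0).mp hfl2
    linarith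
  have hTy : pierceT y = 1 - (A:ℝ) * y := by
    rw [pierceT, if_neg (ne_of_gt h0)]
  refine ⟨hA1, ?_, ?_, ?_⟩
  · rw [hTy]
    have hirr : Irrational ((A:ℝ) * y) := hy.natCast_mul (by omega)
    have := Irrational.ratCast_sub (q := 1) hirr
    rw [Rat.cast_one] at this
    convert this using 2
  · rw [hTy]; linarith
  · rw [hTy, lt_div_iff₀ hAp1]
    nlinarith [mul_lt_mul_of_pos_left hgt hA0]

private lemma irr_iter {x : ℝ} (hx : Irrational x) (h0 : 0 < x) (h1 : x < 1) (j : ℕ) :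
    Irrational (pierceT^[j] x) ∧ 0 < pierceT^[j] x ∧ pierceT^[j] x < 1 := by
  induction j with
  | zero => exact ⟨hx, h0, h1⟩
  | succ j ih =>
    obtain ⟨hi, hp, hl⟩ := ih
    obtain ⟨hA1, hirr, hpos, hlt⟩ := irr_step hi hp hl
    rw [Function.iterate_succ_apply']
    refine ⟨hirr, hpos, ?_⟩
    have hA0 : (1:ℝ) ≤ (⌊1/(pierceT^[j] x)⌋₊ : ℝ) := by exact_mod_cast hA1
    have : 1 / ((⌊1/(pierceT^[j] x)⌋₊ : ℝ) + 1) ≤ 1 := by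
      rw [div_le_one (by linarith)]; linarith
    linarith

theorem stmt10 (E : Set ℝ) (hE : E ⊆ Set.Icc 0 1) :
    Set.Icc (0 : ℝ) 1 ⊆ closure E ↔
      ∀ (n : ℕ) (σ : ℕ → ℕ), 1 ≤ n →
        (∀ k, 1 ≤ k → k ≤ n → 0 < σ k) →
        (∀ k, 1 ≤ k → k + 1 ≤ n → σ k < σ (k + 1)) →
        (fundI n σ ∩ E).Nonempty := by
  constructor
  · intro hcl n σ hn hpos hinc
    obtain ⟨a, b, hal, hab, hbu, _, hIoo, _⟩ := fundI_sandwich n hn σ hpos hinc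
    have hA : 1 ≤ σ 1 := hpos 1 le_rfl hn
    have hA0 : (0:ℝ) < (σ 1 : ℝ) := by exact_mod_cast hA
    have hsub : Ioo a b ⊆ Icc (0:ℝ) 1 := by
      intro y hy
      constructor
      · have h0 : (0:ℝ) < 1 / ((σ 1 : ℝ) + 1) := by positivity
        linarith [hy.1]
      · have h1 : 1 / (σ 1 : ℝ) ≤ 1 := by
          rw [div_le_one hA0]; exact_mod_cast hA
        linarith [hy.2]
    have hy : (a + b)/2 ∈ Ioo a b := ⟨by linarith, by linarith⟩
    have hyc : (a + b)/2 ∈ closure E := hcl (hsub hy)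
    rw [mem_closure_iff] at hyc
    obtain ⟨z, hzo, hzE⟩ := hyc (Ioo a b) isOpen_Ioo hy
    exact ⟨z, hIoo hzo, hzE⟩
  · intro h
    have key : ∀ x : ℝ, Irrational x → x ∈ Ioo (0:ℝ) 1 → x ∈ closure E := by
      intro x hirr hio
      obtain ⟨hx0, hx1⟩ := hio
      set σ : ℕ → ℕ := fun k => ⌊1 / (pierceT^[k-1] x)⌋₊ with hσdef
      have hiter : ∀ j : ℕ, Irrational (pierceT^[j] x) ∧ 0 < pierceT^[j] x ∧ pierceT^[j] x < 1 :=
        irr_iter hirr hx0 hx1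
      have hpos : ∀ k, 1 ≤ k → 0 < σ k := by
        intro k hk
        obtain ⟨hi, hp, hl⟩ := hiter (k-1)
        exact (irr_step hi hp hl).1
      have hinc : ∀ k, 1 ≤ k → σ k < σ (k+1) := by
        intro k hk
        obtain ⟨j, rfl⟩ : ∃ j, k = j + 1 := ⟨k - 1, by omega⟩
        obtain ⟨hi, hp, hl⟩ := hiter j
        obtain ⟨hA1, hirr', hpos', hlt'⟩ := irr_step hi hp hl
        have hT0 : 0 < pierceT (pierceT^[j] x) := hpos'
        have hkey : (↑(⌊1/(pierceT^[j] x)⌋₊ + 1) : ℝ) ≤ 1 / pierceT (pierceT^[j] x) := by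
          rw [le_div_iff₀ hT0]
          push_cast
          have := (lt_div_iff₀ (by positivity : (0:ℝ) < (⌊1/(pierceT^[j] x)⌋₊ : ℝ) + 1)).mp hlt'
          nlinarith [hlt', hT0]
        have hfloor : ⌊1/(pierceT^[j] x)⌋₊ + 1 ≤ ⌊1 / pierceT (pierceT^[j] x)⌋₊ :=
          Nat.le_floor hkey
        have e1 : σ (j+1) = ⌊1/(pierceT^[j] x)⌋₊ := by simp [hσdef]
        have e2 : σ (j+1+1) = ⌊1 / pierceT (pierceT^[j] x)⌋₊ := by
          simp only [hσdef]
          congr 2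
          rw [show j + 1 + 1 - 1 = j + 1 from rfl, Function.iterate_succ_apply']
        omega
      have hgrow : ∀ k, 1 ≤ k → k ≤ σ k := by
        intro k hk
        induction k with
        | zero => omega
        | succ k ihk =>
          rcases Nat.eq_or_lt_of_le hk with hk1 | hk2
          · rw [← hk1]; exact hpos 1 le_rfl
          · have h1k : 1 ≤ k := by omega
            have := hinc k h1k
            have := ihk h1k
            omega
      have hdig : ∀ k, 1 ≤ k → pierceDigit k x = ((σ k : ℕ) : ℕ∞) := by
        intro k hk
        obtain ⟨_, hp, _⟩ := hiter (k-1)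
        rw [pierceDigit, pierceD1, if_neg (ne_of_gt hp)]
      rw [Metric.mem_closure_iff]
      intro ε hε
      obtain ⟨m, hm⟩ := exists_nat_gt (1/ε)
      set n := m + 1 with hndef
      have hn1 : 1 ≤ n := by omega
      obtain ⟨a, b, _, _, _, hlen, _, hsup⟩ :=
        fundI_sandwich n hn1 σ (fun k hk _ => hpos k hk) (fun k hk _ => hinc k hk)
      obtain ⟨e, heI, heE⟩ := h n σ hn1 (fun k hk _ => hpos k hk) (fun k hk _ => hinc k hk)
      have hxI : x ∈ fundI n σ := by
        refine ⟨⟨le_of_lt hx0, le_of_lt hx1⟩, ?_⟩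
        intro k hk _
        exact hdig k hk
      refine ⟨e, heE, ?_⟩
      have hdist : dist x e ≤ b - a := Real.dist_le_of_mem_Icc (hsup hxI) (hsup heI)
      have hσn : (n:ℝ) ≤ (σ n : ℝ) := by exact_mod_cast hgrow n hn1
      have hmn : (m:ℝ) < (σ n : ℝ) + 1 := by
        have : (m:ℝ) < (n:ℝ) + 1 := by push_cast [hndef]; linarith
        linarith
      have hfin : 1 / ((σ n : ℝ) + 1) < ε := by
        have hp : (0:ℝ) < (σ n : ℝ) + 1 := by positivity
        rw [div_lt_iff₀ hp]
        have h1 : 1 < (m:ℝ) * ε := by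
          have := (div_lt_iff₀ hε).mp hm
          linarith
        have h2 : (m:ℝ) * ε ≤ ((σ n : ℝ) + 1) * ε :=
          mul_le_mul_of_nonneg_right (le_of_lt hmn) (le_of_lt hε)
        nlinarith
      linarith
    intro x hx
    have hsub : Icc (0:ℝ) 1 ⊆ closure {y : ℝ | Irrational y ∧ y ∈ Ioo (0:ℝ) 1} := by
      have h1 : Ioo (0:ℝ) 1 ⊆ closure {y : ℝ | Irrational y ∧ y ∈ Ioo (0:ℝ) 1} := by
        intro y hy
        rw [mem_closure_iff]
        intro o ho hyo
        obtain ⟨z, hz, hzo⟩ := dense_irrational.exists_mem_open (ho.inter isOpen_Ioo)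
          ⟨y, hyo, hy⟩
        exact ⟨z, hzo.1, hz, hzo.2⟩
      calc Icc (0:ℝ) 1 = closure (Ioo (0:ℝ) 1) := (closure_Ioo zero_ne_one).symm
        _ ⊆ closure (closure {y : ℝ | Irrational y ∧ y ∈ Ioo (0:ℝ) 1}) := closure_mono h1
        _ = closure {y : ℝ | Irrational y ∧ y ∈ Ioo (0:ℝ) 1} := closure_closure
    have h2 : closure {y : ℝ | Irrational y ∧ y ∈ Ioo (0:ℝ) 1} ⊆ closure E :=
      closure_minimal (fun z hz => key z hz.1 hz.2) isClosed_closure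
    exact h2 (hsub hx)
end

section
/- Let c ∈ [0,∞) and M be a positive integer. Then the set Z_c^{(M)} = { x ∈ 𝕀 : d_n(x) ≤ n + c for all n ≥ M } is countable; consequently it has Hausdorff dimension 0. -/
open Filter Set Topology MeasureTheory
open scoped ENNReal NNReal

/-- The 0-indexed natural Pierce digit: `pdig k x = ⌊1 / T^k x⌋₊`. -/
noncomputable def pdig (k : ℕ) (x : ℝ) : ℕ := ⌊1 / pierceT^[k] x⌋₊

lemma pdig_zero_ge {x : ℝ} (h0 : 0 < x) (h1 : x < 1) : 1 ≤ pdig 0 x := by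
  have h1x : ((1:ℕ):ℝ) ≤ 1 / x := by
    rw [Nat.cast_one, le_div_iff₀ h0]; linarith
  exact Nat.le_floor h1x

lemma pierceStep {x : ℝ} (hx : Irrational x) (h0 : 0 < x) (h1 : x < 1) :
    Irrational (pierceT x) ∧ 0 < pierceT x ∧ pierceT x < 1 ∧
      ⌊1 / x⌋₊ + 1 ≤ ⌊1 / pierceT x⌋₊ := by
  have hx0 : x ≠ 0 := hx.ne_zero
  have hT : pierceT x = 1 - (⌊1/x⌋₊ : ℝ) * x := if_neg hx0
  set m : ℕ := ⌊1/x⌋₊ with hm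
  have hxpos : (0:ℝ) < 1 / x := by positivity
  have hm1 : 1 ≤ m := pdig_zero_ge h0 h1
  have hfl : (m:ℝ) ≤ 1 / x := Nat.floor_le hxpos.le
  have hirr : Irrational (1 / x) := by simpa [one_div] using hx.inv
  have hlt : (m:ℝ) < 1 / x := lt_of_le_of_ne hfl (Ne.symm (hirr.ne_nat m))
  have hmx : (m:ℝ) * x < 1 := (lt_div_iff₀ h0).mp hlt
  have hTpos : 0 < pierceT x := by rw [hT]; linarith
  have hlt2 : 1 / x < (m:ℝ) + 1 := Nat.lt_floor_add_one _
  have hx2 : 1 < ((m:ℝ) + 1) * x := by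
    rw [div_lt_iff₀ h0] at hlt2; linarith
  have hm1R : (1:ℝ) ≤ m := by exact_mod_cast hm1
  have hTlt : pierceT x < 1 := by
    rw [hT]; nlinarith
  have hfloor : ((m:ℝ) + 1) ≤ 1 / pierceT x := by
    rw [le_div_iff₀ hTpos, hT]; nlinarith
  have hdig : m + 1 ≤ ⌊1 / pierceT x⌋₊ := by
    apply Nat.le_floor
    push_cast
    exact hfloor
  have hTirr : Irrational (pierceT x) := by
    rw [hT]
    have h1 : Irrational ((m:ℝ) * x) := hx.natCast_mul (by omega)
    simpa using h1.ratCast_sub (q := 1)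
  exact ⟨hTirr, hTpos, hTlt, hdig⟩

lemma iter_good {x : ℝ} (hx : Irrational x) (h0 : 0 < x) (h1 : x < 1) (k : ℕ) :
    Irrational (pierceT^[k] x) ∧ 0 < pierceT^[k] x ∧ pierceT^[k] x < 1 := by
  induction k with
  | zero => exact ⟨hx, h0, h1⟩
  | succ n ih =>
    rw [Function.iterate_succ_apply']
    obtain ⟨a, b, c, _⟩ := pierceStep ih.1 ih.2.1 ih.2.2
    exact ⟨a, b, c⟩

lemma pdig_succ {x : ℝ} (hx : Irrational x) (h0 : 0 < x) (h1 : x < 1) (k : ℕ) :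
    pdig k x + 1 ≤ pdig (k + 1) x := by
  obtain ⟨a, b, c⟩ := iter_good hx h0 h1 k
  have := (pierceStep a b c).2.2.2
  simpa [pdig, Function.iterate_succ_apply'] using this

lemma pdig_ge {x : ℝ} (hx : Irrational x) (h0 : 0 < x) (h1 : x < 1) (k : ℕ) :
    k + 1 ≤ pdig k x := by
  induction k with
  | zero => exact pdig_zero_ge h0 h1
  | succ n ih => have := pdig_succ hx h0 h1 n; omega

lemma dist_step {x y : ℝ} (hx0 : x ≠ 0) (hy0 : y ≠ 0) (h : ⌊1/x⌋₊ = ⌊1/y⌋₊) :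
    |pierceT x - pierceT y| = (⌊1/x⌋₊ : ℝ) * |x - y| := by
  rw [pierceT, pierceT, if_neg hx0, if_neg hy0, ← h]
  rw [show (1 - (⌊1/x⌋₊:ℝ) * x) - (1 - (⌊1/x⌋₊:ℝ) * y) = (⌊1/x⌋₊:ℝ) * (y - x) by ring,
    abs_mul, Nat.abs_cast, abs_sub_comm y x]

lemma dist_iter {x y : ℝ} (hx : Irrational x) (h0x : 0 < x) (h1x : x < 1)
    (hy : Irrational y) (h0y : 0 < y) (h1y : y < 1)
    (hd : ∀ k, pdig k x = pdig k y) (n : ℕ) :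
    |pierceT^[n] x - pierceT^[n] y| = (∏ i ∈ Finset.range n, (pdig i x : ℝ)) * |x - y| := by
  induction n with
  | zero => simp
  | succ n ih =>
    have hxk := (iter_good hx h0x h1x n).1
    have hyk := (iter_good hy h0y h1y n).1
    have hdk : ⌊1 / pierceT^[n] x⌋₊ = ⌊1 / pierceT^[n] y⌋₊ := hd n
    rw [Function.iterate_succ_apply', Function.iterate_succ_apply',
      dist_step hxk.ne_zero hyk.ne_zero hdk, ih, Finset.prod_range_succ]
    show (pdig n x : ℝ) * _ = _
    ring

lemma prod_pdig_ge {x : ℝ} (hx : Irrational x) (h0 : 0 < x) (h1 : x < 1) (n : ℕ) :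
    (n : ℝ) ≤ ∏ i ∈ Finset.range n, (pdig i x : ℝ) := by
  have h1' : n ≤ ∏ i ∈ Finset.range n, pdig i x := by
    calc n ≤ n.factorial := Nat.self_le_factorial n
    _ = ∏ i ∈ Finset.range n, (i + 1) := (Finset.prod_range_add_one_eq_factorial n).symm
    _ ≤ ∏ i ∈ Finset.range n, pdig i x :=
        Finset.prod_le_prod' fun i _ => pdig_ge hx h0 h1 i
  calc (n : ℝ) ≤ ((∏ i ∈ Finset.range n, pdig i x : ℕ) : ℝ) := by exact_mod_cast h1'
  _ = ∏ i ∈ Finset.range n, (pdig i x : ℝ) := by push_cast; ring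

lemma pierce_inj {x y : ℝ} (hx : Irrational x) (h0x : 0 < x) (h1x : x < 1)
    (hy : Irrational y) (h0y : 0 < y) (h1y : y < 1)
    (hd : ∀ k, pdig k x = pdig k y) : x = y := by
  by_contra hne
  have hpos : 0 < |x - y| := abs_pos.mpr (sub_ne_zero.mpr hne)
  obtain ⟨n, hn⟩ := exists_nat_gt (1 / |x - y|)
  have hxn := iter_good hx h0x h1x n
  have hyn := iter_good hy h0y h1y n
  have hb : |pierceT^[n] x - pierceT^[n] y| ≤ 1 := by
    rw [abs_sub_le_iff]
    constructor <;> nlinarith [hxn.2.1, hxn.2.2, hyn.2.1, hyn.2.2]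
  have heq := dist_iter hx h0x h1x hy h0y h1y hd n
  have hprod := prod_pdig_ge hx h0x h1x n
  have : (n : ℝ) * |x - y| ≤ 1 := by
    calc (n : ℝ) * |x - y| ≤ (∏ i ∈ Finset.range n, (pdig i x : ℝ)) * |x - y| := by
          apply mul_le_mul_of_nonneg_right hprod (abs_nonneg _)
    _ = |pierceT^[n] x - pierceT^[n] y| := heq.symm
    _ ≤ 1 := hb
  rw [div_lt_iff₀ hpos] at hn
  linarith

theorem stmt13 (c : ℝ) (hc : 0 ≤ c) (M : ℕ) (hM : 1 ≤ M) :
    ({x ∈ Set.Icc (0 : ℝ) 1 | Irrational x ∧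
        ∀ n, M ≤ n → ∃ m : ℕ, pierceDigit n x = ((m : ℕ) : ℕ∞) ∧ (m : ℝ) ≤ n + c} : Set ℝ).Countable ∧
    dimH ({x ∈ Set.Icc (0 : ℝ) 1 | Irrational x ∧
        ∀ n, M ≤ n → ∃ m : ℕ, pierceDigit n x = ((m : ℕ) : ℕ∞) ∧ (m : ℝ) ≤ n + c} : Set ℝ) = 0 := by
  have hcount : ({x ∈ Set.Icc (0 : ℝ) 1 | Irrational x ∧
      ∀ n, M ≤ n → ∃ m : ℕ, pierceDigit n x = ((m : ℕ) : ℕ∞) ∧ (m : ℝ) ≤ n + c} : Set ℝ).Countable := by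
    -- the target family: eventually-linear digit sequences
    have hsub : ({x ∈ Set.Icc (0 : ℝ) 1 | Irrational x ∧
        ∀ n, M ≤ n → ∃ m : ℕ, pierceDigit n x = ((m : ℕ) : ℕ∞) ∧ (m : ℝ) ≤ n + c} : Set ℝ) ⊆
        ⋃ (N : ℕ) (j : ℕ),
          {x : ℝ | Irrational x ∧ 0 < x ∧ x < 1 ∧ ∀ k, N ≤ k → pdig k x = k + 1 + j} := by
      rintro x ⟨hxI, hirr, hdig⟩
      have h0 : 0 < x := lt_of_le_of_ne hxI.1 (Ne.symm hirr.ne_zero)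
      have h1 : x < 1 := lt_of_le_of_ne hxI.2 hirr.ne_one
      -- digit bound, 0-indexed: for k ≥ M - 1, (pdig k x : ℝ) ≤ k + 1 + c
      have hbound : ∀ k, M - 1 ≤ k → (pdig k x : ℝ) ≤ k + 1 + c := by
        intro k hk
        obtain ⟨m, hm1, hm2⟩ := hdig (k + 1) (by omega)
        have hne : pierceT^[k] x ≠ 0 := ((iter_good hirr h0 h1 k).1).ne_zero
        have : pierceDigit (k + 1) x = ((pdig k x : ℕ) : ℕ∞) := by
          simp [pierceDigit, pierceD1, pdig, hne]
        rw [this] at hm1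
        have : pdig k x = m := by exact_mod_cast hm1
        rw [this]
        push_cast at hm2 ⊢
        linarith
      -- monotone bounded ℕ-sequence g is eventually constant
      set g : ℕ → ℕ := fun i => pdig (i + (M - 1)) x - (i + (M - 1) + 1) with hg
      have hglb : ∀ i, i + (M - 1) + 1 ≤ pdig (i + (M - 1)) x := fun i =>
        pdig_ge hirr h0 h1 (i + (M - 1))
      have hgmono : Monotone g := by
        apply monotone_nat_of_le_succ
        intro i
        have h1' := pdig_succ hirr h0 h1 (i + (M - 1))
        have h2' := hglb i
        simp only [hg]
        have : i + 1 + (M - 1) = i + (M - 1) + 1 := by omega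
        rw [this]
        omega
      have hgub : ∀ i, g i ≤ ⌊c⌋₊ := by
        intro i
        apply Nat.le_floor
        have hb := hbound (i + (M - 1)) (by omega)
        have hl := hglb i
        have : (g i : ℝ) = (pdig (i + (M - 1)) x : ℝ) - (i + (M - 1) + 1 : ℕ) := by
          simp only [hg]
          push_cast [Nat.cast_sub hl]
          ring
        rw [this]
        push_cast
        push_cast at hb
        linarith
      have hbdd : BddAbove (Set.range g) := ⟨⌊c⌋₊, by rintro _ ⟨i, rfl⟩; exact hgub i⟩
      have hmem := Nat.sSup_mem (Set.range_nonempty g) hbdd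
      obtain ⟨i₀, hi₀⟩ := hmem
      have hconst : ∀ i, i₀ ≤ i → g i = sSup (Set.range g) := by
        intro i hi
        have h1' : g i ≤ sSup (Set.range g) := le_csSup hbdd ⟨i, rfl⟩
        have h2' : g i₀ ≤ g i := hgmono hi
        omega
      refine Set.mem_iUnion.mpr ⟨i₀ + (M - 1), Set.mem_iUnion.mpr ⟨sSup (Set.range g),
        hirr, h0, h1, ?_⟩⟩
      intro k hk
      have hc' := hconst (k - (M - 1)) (by omega)
      have hik : k - (M - 1) + (M - 1) = k := by omega
      have hl : k + 1 ≤ pdig k x := pdig_ge hirr h0 h1 k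
      have hval : pdig k x - (k + 1) = sSup (Set.range g) := by
        rw [← hik]; exact hc'
      omega
    apply Set.Countable.mono hsub
    apply Set.countable_iUnion
    intro N
    apply Set.countable_iUnion
    intro j
    apply Set.countable_of_injective_of_countable_image
      (f := fun x => (fun i : Fin N => pdig i x))
    · rintro x ⟨hx, h0x, h1x, hdx⟩ y ⟨hy, h0y, h1y, hdy⟩ hfeq
      apply pierce_inj hx h0x h1x hy h0y h1y
      intro k
      by_cases hkN : k < N
      · exact congrFun hfeq ⟨k, hkN⟩
      · rw [hdx k (by omega), hdy k (by omega)]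
    · exact Set.to_countable _
  exact ⟨hcount, hcount.dimH_zero⟩
end
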